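/- arXiv:2602.07710 — 3 statements merged into one kernel-verified Lean document; each statement's English description precedes it below -/
import Mathlib

section
/- Let (X, ρ) be a doubling metric space, let ε, ε', δ, δ' > 0 satisfy 0 < δ < ε and 0 < δ' < ε', and let H be a hypothesis class on X satisfying the r-UUS property for some r > 0. Then H is (ε, ε')-uniformly generatable if and only if H is (δ, δ')-uniformly generatable, and H is (ε, ε')-non-uniformly generatable if and only if H is (δ, δ')-non-uniformly generatable. -/
open Set

namespace Gen

variable {X : Type*}

/-- The support of a hypothesis `h : X → Bool`: its set of positive examples. -/
def supp (h : X → Bool) : Set X := {x | h x = true}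

/-- Closed ball of radius `ε` around `c`, with respect to an explicit distance `ρ`. -/
def ball (ρ : X → X → ℝ) (c : X) (ε : ℝ) : Set X := {y | ρ c y ≤ ε}

/-- Closed `ε`-neighborhood of a set `A`: points whose infimal distance to `A` is `≤ ε`. -/
def setBall (ρ : X → X → ℝ) (A : Set X) (ε : ℝ) : Set X :=
  {y | sInf ((fun a => ρ a y) '' A) ≤ ε}

/-- The `ε`-covering number of `A` with respect to `ρ`, valued in `ℕ∞`
(`⊤` if no finite cover exists). -/
noncomputable def covN (ρ : X → X → ℝ) (ε : ℝ) (A : Set X) : ℕ∞ :=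
  sInf {n : ℕ∞ | ∃ S : Finset X, (S.card : ℕ∞) = n ∧ A ⊆ ⋃ θ ∈ S, ball ρ θ ε}

/-- `H` satisfies the `r`-Uniformly Unbounded Support property w.r.t. `ρ`. -/
def UUS (ρ : X → X → ℝ) (H : Set (X → Bool)) (r : ℝ) : Prop :=
  ∀ h ∈ H, covN ρ r (supp h) = ⊤

/-- The list of the first `s` terms `x 0, …, x (s-1)` of a sequence. -/
def prefList (x : ℕ → X) (s : ℕ) : List X := List.ofFn (fun i : Fin s => x i)

/-- The set of the first `s` terms of a sequence. -/
def prefSet (x : ℕ → X) (s : ℕ) : Set X := x '' Iio s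

/-- `(ε, ε')`-uniform generatability. -/
def UnifGen (ρ : X → X → ℝ) (ε ε' : ℝ) (H : Set (X → Bool)) : Prop :=
  ∃ G : List X → X, ∃ d : ℕ, ∀ h ∈ H, ∀ x : ℕ → X, (∀ i, x i ∈ supp h) →
    ∀ t : ℕ, (d : ℕ∞) ≤ covN ρ ε (prefSet x t) →
      ∀ s ≥ t, G (prefList x s) ∈ supp h \ setBall ρ (prefSet x s) ε'

/-- `(ε, ε')`-non-uniform generatability. -/
def NonUnifGen (ρ : X → X → ℝ) (ε ε' : ℝ) (H : Set (X → Bool)) : Prop :=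
  ∃ G : List X → X, ∀ h ∈ H, ∃ d : ℕ, ∀ x : ℕ → X, (∀ i, x i ∈ supp h) →
    ∀ t : ℕ, (d : ℕ∞) ≤ covN ρ ε (prefSet x t) →
      ∀ s ≥ t, G (prefList x s) ∈ supp h \ setBall ρ (prefSet x s) ε'

/-- `(ε, ε')`-generatability in the limit. -/
def GenInLimit (ρ : X → X → ℝ) (ε ε' : ℝ) (H : Set (X → Bool)) : Prop :=
  ∃ G : List X → X, ∀ h ∈ H, ∀ x : ℕ → X, (∀ i, x i ∈ supp h) →
    supp h ⊆ setBall ρ (range x) ε →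
      ∃ t : ℕ, ∀ s ≥ t, G (prefList x s) ∈ supp h \ setBall ρ (prefSet x s) ε'

/-- The closure `⟨x_1,…,x_t⟩_H` of a finite sample: intersection of the supports of all
hypotheses in the version space. -/
def clos (H : Set (X → Bool)) (l : List X) : Set X :=
  ⋂ h ∈ {h | h ∈ H ∧ ∀ y ∈ l, y ∈ supp h}, supp h

/-- The `(ε, ε')`-closure dimension of `H`, valued in `ℕ∞`. -/
noncomputable def closureDim (ρ : X → X → ℝ) (ε ε' : ℝ) (H : Set (X → Bool)) : ℕ∞ :=
  sSup (insert 0 {d : ℕ∞ | ∃ h ∈ H, ∃ l : List X, (∀ y ∈ l, y ∈ supp h) ∧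
    covN ρ ε {y | y ∈ l} = d ∧ covN ρ ε' (clos H l) ≠ ⊤})

/-- `ρ` is a metric on `X`. -/
def IsMetricDist (ρ : X → X → ℝ) : Prop :=
  (∀ x y, ρ x y = 0 ↔ x = y) ∧ (∀ x y, ρ x y = ρ y x) ∧
    ∀ x y z, ρ x z ≤ ρ x y + ρ y z

/-- `(X, ρ)` is doubling: every closed ball of radius `r` can be covered by at most `M`
closed balls of radius `r / 2`. -/
def Doubling (ρ : X → X → ℝ) : Prop :=
  ∃ M : ℕ, ∀ (x : X) (r : ℝ), 0 < r →
    ∃ S : Finset X, S.card ≤ M ∧ ball ρ x r ⊆ ⋃ θ ∈ S, ball ρ θ (r / 2)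


section Aux
variable {X : Type*} [MetricSpace X]

lemma ball_mono {c : X} {r₁ r₂ : ℝ} (h : r₁ ≤ r₂) : ball dist c r₁ ⊆ ball dist c r₂ :=
  fun _ hy => le_trans hy h

lemma covN_anti {δ ε : ℝ} (h : δ ≤ ε) (A : Set X) : covN dist ε A ≤ covN dist δ A := by
  apply sInf_le_sInf
  rintro n ⟨S, hS, hcov⟩
  exact ⟨S, hS, hcov.trans (Set.iUnion₂_mono fun θ _ => ball_mono h)⟩

lemma covN_empty (ε : ℝ) : covN (dist : X → X → ℝ) ε (∅ : Set X) = 0 := by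
  apply le_antisymm _ zero_le
  apply sInf_le
  exact ⟨∅, by simp, by simp⟩

lemma covN_le_card {ε : ℝ} {A : Set X} {S : Finset X} (hcov : A ⊆ ⋃ θ ∈ S, ball dist θ ε) :
    covN dist ε A ≤ (S.card : ℕ∞) := sInf_le ⟨S, rfl, hcov⟩

lemma exists_cover_of_ne_top {ε : ℝ} {A : Set X} (h : covN dist ε A ≠ ⊤) :
    ∃ S : Finset X, (S.card : ℕ∞) ≤ covN dist ε A ∧ A ⊆ ⋃ θ ∈ S, ball dist θ ε := by
  have hlt : covN dist ε A < covN dist ε A + 1 := (ENat.lt_add_one_iff h).mpr le_rfl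
  obtain ⟨a, ⟨S, hS, hcov⟩, ha⟩ := sInf_lt_iff.mp hlt
  exact ⟨S, by rw [hS]; exact (ENat.lt_add_one_iff h).mp ha, hcov⟩

lemma doubling_iter (hdbl : Doubling (dist : X → X → ℝ)) :
    ∃ M : ℕ, ∀ (n : ℕ) (x : X) (r : ℝ), 0 < r →
      ∃ S : Finset X, S.card ≤ M ^ n ∧ ball dist x r ⊆ ⋃ θ ∈ S, ball dist θ (r / 2 ^ n) := by
  classical
  obtain ⟨M, hM⟩ := hdbl
  refine ⟨M, fun n => ?_⟩
  induction n with
  | zero =>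
    intro x r hr
    refine ⟨{x}, by simp, fun y hy => ?_⟩
    refine Set.mem_iUnion₂.mpr ⟨x, Finset.mem_singleton_self x, ?_⟩
    simpa using hy
  | succ n ih =>
    intro x r hr
    obtain ⟨S, hcard, hcov⟩ := ih x r hr
    have hpos : 0 < r / 2 ^ n := by positivity
    refine ⟨S.biUnion (fun θ => (hM θ (r / 2 ^ n) hpos).choose), ?_, ?_⟩
    · calc (S.biUnion fun θ => (hM θ (r / 2 ^ n) hpos).choose).card
          ≤ ∑ θ ∈ S, ((hM θ (r / 2 ^ n) hpos).choose).card := Finset.card_biUnion_le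
        _ ≤ S.card * M := by
            simpa using Finset.sum_le_card_nsmul S _ M
              (fun θ _ => (hM θ (r / 2 ^ n) hpos).choose_spec.1)
        _ ≤ M ^ n * M := Nat.mul_le_mul_right _ hcard
        _ = M ^ (n + 1) := (pow_succ M n).symm
    · intro y hy
      obtain ⟨θ, hθS, hθ⟩ := Set.mem_iUnion₂.mp (hcov hy)
      obtain ⟨φ, hφ, hyφ⟩ := Set.mem_iUnion₂.mp ((hM θ (r / 2 ^ n) hpos).choose_spec.2 hθ)
      refine Set.mem_iUnion₂.mpr ⟨φ, Finset.mem_biUnion.mpr ⟨θ, hθS, hφ⟩, ?_⟩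
      have heq : r / 2 ^ n / 2 = r / 2 ^ (n + 1) := by ring
      rwa [heq] at hyφ

lemma exists_pow_div_le {ε c : ℝ} (hε : 0 < ε) (hc : 0 < c) : ∃ n : ℕ, ε / 2 ^ n ≤ c := by
  obtain ⟨n, hn⟩ := pow_unbounded_of_one_lt (ε / c) (one_lt_two (α := ℝ))
  refine ⟨n, ?_⟩
  rw [div_le_iff₀ (by positivity)]
  rw [div_lt_iff₀ hc] at hn
  linarith [hn]

lemma covN_scale (hdbl : Doubling (dist : X → X → ℝ)) {δ ε : ℝ} (hδ : 0 < δ) (hδε : δ ≤ ε) :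
    ∃ K : ℕ, 0 < K ∧ ∀ A : Set X, covN dist δ A ≤ (K : ℕ∞) * covN dist ε A := by
  classical
  obtain ⟨M, hM⟩ := doubling_iter hdbl
  have hε : 0 < ε := lt_of_lt_of_le hδ hδε
  obtain ⟨n, hn⟩ := exists_pow_div_le hε hδ
  refine ⟨M ^ n + 1, Nat.succ_pos _, fun A => ?_⟩
  by_cases htop : covN dist ε A = ⊤
  · rw [htop, ENat.mul_top (by exact_mod_cast Nat.succ_ne_zero (M ^ n))]
    exact le_top
  obtain ⟨S, hScard, hScov⟩ := exists_cover_of_ne_top htop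
  have hTcov : A ⊆ ⋃ θ ∈ S.biUnion (fun θ => (hM n θ ε hε).choose), ball dist θ δ := by
    intro y hy
    obtain ⟨θ, hθS, hθ⟩ := Set.mem_iUnion₂.mp (hScov hy)
    obtain ⟨φ, hφ, hyφ⟩ := Set.mem_iUnion₂.mp ((hM n θ ε hε).choose_spec.2 hθ)
    exact Set.mem_iUnion₂.mpr ⟨φ, Finset.mem_biUnion.mpr ⟨θ, hθS, hφ⟩, ball_mono hn hyφ⟩
  have hTcard : (S.biUnion fun θ => (hM n θ ε hε).choose).card ≤ S.card * (M ^ n + 1) := by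
    calc (S.biUnion fun θ => (hM n θ ε hε).choose).card
        ≤ ∑ θ ∈ S, ((hM n θ ε hε).choose).card := Finset.card_biUnion_le
      _ ≤ S.card * M ^ n := by
          simpa using Finset.sum_le_card_nsmul S _ (M ^ n)
            (fun θ _ => (hM n θ ε hε).choose_spec.1)
      _ ≤ S.card * (M ^ n + 1) := Nat.mul_le_mul_left _ (Nat.le_succ _)
  calc covN dist δ A ≤ _ := covN_le_card hTcov
    _ ≤ ((S.card * (M ^ n + 1) : ℕ) : ℕ∞) := by exact_mod_cast hTcard
    _ = (S.card : ℕ∞) * ((M ^ n + 1 : ℕ) : ℕ∞) := by push_cast; ring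
    _ ≤ covN dist ε A * ((M ^ n + 1 : ℕ) : ℕ∞) := mul_le_mul_left hScard _
    _ = ((M ^ n + 1 : ℕ) : ℕ∞) * covN dist ε A := mul_comm _ _

lemma enat_cancel {K d : ℕ} (c : ℕ∞) (h : ((K * d : ℕ) : ℕ∞) ≤ (K : ℕ∞) * c) (hK : 0 < K) :
    (d : ℕ∞) ≤ c := by
  induction c using ENat.recTopCoe with
  | top => exact le_top
  | coe n =>
    have h2 : K * d ≤ K * n := by exact_mod_cast h
    exact_mod_cast Nat.le_of_mul_le_mul_left h2 hK

lemma setBall_mono {A : Set X} {c₁ c₂ : ℝ} (h : c₁ ≤ c₂) :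
    setBall (dist : X → X → ℝ) A c₁ ⊆ setBall dist A c₂ :=
  fun _ hy => le_trans hy h

lemma setBall_empty {c : ℝ} (hc : 0 ≤ c) :
    setBall (dist : X → X → ℝ) (∅ : Set X) c = Set.univ := by
  ext y
  simp [setBall, Real.sInf_empty, hc]

lemma dist_gt_of_not_setBall {A : Set X} (hA : A.Finite) {z : X} {c : ℝ}
    (h : z ∉ setBall dist A c) : ∀ a ∈ A, c < dist a z := by
  intro a ha
  by_contra hle
  push_neg at hle
  refine h ?_
  show sInf ((fun a => dist a z) '' A) ≤ c
  exact le_trans (csInf_le (hA.image _).bddBelow ⟨a, ha, rfl⟩) hle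

lemma not_setBall_of_forall {A : Set X} (hA : A.Finite) (hne : A.Nonempty) {z : X} {c : ℝ}
    (h : ∀ a ∈ A, c < dist a z) : z ∉ setBall dist A c := by
  intro hz
  have hmem := (hne.image (fun a => dist a z)).csInf_mem (hA.image _)
  obtain ⟨a, ha, heq⟩ := hmem
  have hz' : sInf ((fun a => dist a z) '' A) ≤ c := hz
  have hlt2 : c < sInf ((fun a => dist a z) '' A) := by
    rw [← heq]; exact h a ha
  exact absurd hz' (not_le.mpr hlt2)

lemma mem_prefList {x : ℕ → X} {s : ℕ} {a : X} : a ∈ prefList x s ↔ ∃ i < s, x i = a := by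
  simp only [prefList, List.mem_ofFn, Set.mem_range]
  constructor
  · rintro ⟨i, rfl⟩; exact ⟨i, i.isLt, rfl⟩
  · rintro ⟨i, hi, rfl⟩; exact ⟨⟨i, hi⟩, rfl⟩

lemma prefList_congr {x y : ℕ → X} {s : ℕ} (h : ∀ i < s, x i = y i) :
    prefList x s = prefList y s := by
  unfold prefList
  congr 1
  funext i
  exact h i i.isLt

lemma prefSet_congr {x y : ℕ → X} {s : ℕ} (h : ∀ i < s, x i = y i) :
    prefSet x s = prefSet y s := by
  unfold prefSet
  ext a
  constructor
  · rintro ⟨i, hi, rfl⟩; exact ⟨i, hi, (h i hi).symm⟩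
  · rintro ⟨i, hi, rfl⟩; exact ⟨i, hi, h i hi⟩

lemma prefList_succ {x : ℕ → X} {s : ℕ} : prefList x (s + 1) = prefList x s ++ [x s] := by
  unfold prefList
  rw [List.ofFn_succ', List.concat_eq_append]
  simp

lemma pigeonhole_sep (hdbl : Doubling (dist : X → X → ℝ)) {δ' ε' : ℝ} (hδ' : 0 < δ')
    (hlt : δ' < ε') :
    ∃ K : ℕ, ∀ (P : Finset X) (f : ℕ → X) (m : ℕ),
      (∀ i < m, ∀ j < m, i ≠ j → δ' < dist (f i) (f j)) →
      K * P.card < m → ∃ j < m, ∀ p ∈ P, ε' < dist p (f j) := by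
  classical
  obtain ⟨M, hM⟩ := doubling_iter hdbl
  have hε' : 0 < ε' := hδ'.trans hlt
  obtain ⟨n, hn⟩ := exists_pow_div_le hε' (by positivity : (0:ℝ) < δ' / 2)
  refine ⟨M ^ n, fun P f m hsep hcard => ?_⟩
  by_contra hcon
  push_neg at hcon
  have hTcard : (P.biUnion fun p => (hM n p ε' hε').choose).card ≤ M ^ n * P.card := by
    calc (P.biUnion fun p => (hM n p ε' hε').choose).card
        ≤ ∑ p ∈ P, ((hM n p ε' hε').choose).card := Finset.card_biUnion_le
      _ ≤ P.card * M ^ n := by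
          simpa using Finset.sum_le_card_nsmul P _ (M ^ n)
            (fun p _ => (hM n p ε' hε').choose_spec.1)
      _ = M ^ n * P.card := Nat.mul_comm _ _
  have hmem : ∀ j : ℕ, j < m → ∃ φ ∈ P.biUnion fun p => (hM n p ε' hε').choose,
      dist φ (f j) ≤ δ' / 2 := by
    intro j hj
    obtain ⟨p, hp, hpd⟩ := hcon j hj
    obtain ⟨φ, hφ, hfφ⟩ := Set.mem_iUnion₂.mp ((hM n p ε' hε').choose_spec.2 hpd)
    exact ⟨φ, Finset.mem_biUnion.mpr ⟨p, hp, hφ⟩, le_trans hfφ hn⟩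
  choose g hgT hgd using hmem
  have hply : ∃ i ∈ Finset.range m, ∃ j ∈ Finset.range m, i ≠ j ∧
      (fun j => if h : j < m then g j h else f 0) i = (fun j => if h : j < m then g j h else f 0) j := by
    apply Finset.exists_ne_map_eq_of_card_lt_of_maps_to
    · rw [Finset.card_range]
      exact lt_of_le_of_lt hTcard hcard
    · intro j hj
      have hjm := Finset.mem_range.mp hj
      simp only [hjm, dif_pos]
      exact hgT j hjm
  obtain ⟨i, hi, j, hj, hij, heq⟩ := hply
  have him := Finset.mem_range.mp hi
  have hjm := Finset.mem_range.mp hj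
  simp only [him, hjm, dif_pos] at heq
  have hd : dist (f i) (f j) ≤ δ' := by
    calc dist (f i) (f j) ≤ dist (g i him) (f i) + dist (g i him) (f j) :=
          dist_triangle_left _ _ _
      _ = dist (g i him) (f i) + dist (g j hjm) (f j) := by rw [heq]
      _ ≤ δ' / 2 + δ' / 2 := add_le_add (hgd i him) (hgd j hjm)
      _ = δ' := by ring
  exact absurd hd (not_le.mpr (hsep i him j hjm hij))


def Gud (ρ : X → X → ℝ) (ε ε' : ℝ) (G : List X → X) (d : ℕ) (h : X → Bool) : Prop :=
  ∀ x : ℕ → X, (∀ i, x i ∈ supp h) →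
    ∀ t : ℕ, (d : ℕ∞) ≤ covN ρ ε (prefSet x t) →
      ∀ s ≥ t, G (prefList x s) ∈ supp h \ setBall ρ (prefSet x s) ε'

noncomputable def chainList (G : List X → X) : List X → ℕ → List X
  | l, 0 => l
  | l, (j + 1) => chainList G l j ++ [G (chainList G l j)]

noncomputable def chainPt (G : List X → X) (l : List X) (j : ℕ) : X := G (chainList G l j)

open Classical in
noncomputable def newGen (G : List X → X) (ε' : ℝ) : List X → X := fun l =>
  if hp : ∃ j, ∀ y ∈ l, ε' < dist y (chainPt G l j) then chainPt G l hp.choose else G l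

lemma easy_dir {δ δ' ε ε' : ℝ} (hδ'ε' : δ' ≤ ε') {K : ℕ} (hK : 0 < K)
    (hKcov : ∀ A : Set X, covN dist δ A ≤ (K : ℕ∞) * covN dist ε A)
    (G : List X → X) (d : ℕ) (h : X → Bool) (hG : Gud dist ε ε' G d h) :
    Gud dist δ δ' G (K * d) h := by
  intro x hx t ht s hst
  have ht' : (d : ℕ∞) ≤ covN dist ε (prefSet x t) :=
    enat_cancel _ (le_trans ht (hKcov _)) hK
  have hres := hG x hx t ht' s hst
  exact ⟨hres.1, fun hmem => hres.2 (setBall_mono hδ'ε' hmem)⟩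

lemma hard_dir {δ δ' ε ε' : ℝ} (hdbl : Doubling (dist : X → X → ℝ)) (hδ' : 0 < δ')
    (hδ'ε' : δ' < ε') (hδε : δ ≤ ε) (G : List X → X) (d : ℕ) (h : X → Bool)
    (hG : Gud dist δ δ' G d h) : Gud dist ε ε' (newGen G ε') d h := by
  classical
  obtain ⟨K, hK⟩ := pigeonhole_sep hdbl hδ' hδ'ε'
  intro x hx t ht s hst
  rcases Nat.eq_zero_or_pos s with hs0 | hs
  · subst hs0
    have ht0 : t = 0 := Nat.le_zero.mp hst
    subst ht0
    have hpe : prefSet x 0 = (∅ : Set X) := by unfold prefSet; ext a; simp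
    rw [hpe, covN_empty] at ht
    have hd0 : (d : ℕ∞) = 0 := le_antisymm ht zero_le
    have hres := hG x hx 0 (by rw [hd0]; exact zero_le) 0 le_rfl
    rw [hpe, setBall_empty hδ'.le, Set.diff_univ] at hres
    exact absurd hres (Set.notMem_empty _)
  set l := prefList x s with hl
  set y : ℕ → X := fun n => if n < s then x n else chainPt G l (n - s) with hy
  have hyx : ∀ i < s, y i = x i := fun i hi => by simp [hy, hi]
  have hyz : ∀ j : ℕ, y (s + j) = chainPt G l j := by
    intro j
    have hns : ¬ (s + j < s) := by omega
    simp [hy, hns]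
  have hlpre : ∀ j, chainList G l j = prefList y (s + j) := by
    intro j
    induction j with
    | zero =>
      show l = prefList y (s + 0)
      rw [Nat.add_zero, hl]
      exact prefList_congr fun i hi => (hyx i hi).symm
    | succ j ih =>
      rw [show s + (j + 1) = (s + j) + 1 from rfl, prefList_succ, ← ih]
      show chainList G l j ++ [G (chainList G l j)] = chainList G l j ++ [y (s + j)]
      rw [hyz j, chainPt, ih]
  have key : ∀ j : ℕ, chainPt G l j ∈ supp h ∧
      chainPt G l j ∉ setBall dist (prefSet y (s + j)) δ' := by
    intro j
    induction j using Nat.strong_induction_on with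
    | _ j ih =>
      have hymem : ∀ i < s + j, y i ∈ supp h := by
        intro i hi
        rcases lt_or_ge i s with h1 | h1
        · rw [hyx i h1]; exact hx i
        · obtain ⟨j', rfl⟩ := Nat.exists_eq_add_of_le h1
          rw [hyz j']
          exact (ih j' (by omega)).1
      set yj : ℕ → X := fun n => if n < s + j then y n else x 0 with hyj
      have hyjy : ∀ i < s + j, yj i = y i := fun i hi => by simp [hyj, hi]
      have hyjs : ∀ i, yj i ∈ supp h := by
        intro i
        by_cases hi : i < s + j
        · rw [hyjy i hi]; exact hymem i hi
        · have : yj i = x 0 := by simp [hyj, hi]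
          rw [this]; exact hx 0
      have htrig : (d : ℕ∞) ≤ covN dist δ (prefSet yj t) := by
        have hpt : prefSet yj t = prefSet x t := by
          apply prefSet_congr
          intro i hi
          rw [hyjy i (by omega), hyx i (by omega)]
        rw [hpt]
        exact le_trans ht (covN_anti hδε _)
      have hres := hG yj hyjs t htrig (s + j) (by omega)
      have hpl : prefList yj (s + j) = chainList G l j := by
        rw [hlpre j]; exact prefList_congr hyjy
      have hps : prefSet yj (s + j) = prefSet y (s + j) := prefSet_congr hyjy
      rw [hpl, hps] at hres
      exact ⟨hres.1, hres.2⟩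
  have hfin : ∀ m : ℕ, (prefSet y m).Finite := fun m => (Set.finite_Iio m).image y
  have hsep : ∀ i j, i < j → δ' < dist (chainPt G l i) (chainPt G l j) := by
    intro i j hij
    have hmem : y (s + i) ∈ prefSet y (s + j) := ⟨s + i, by simp; omega, rfl⟩
    have hgt := dist_gt_of_not_setBall (hfin (s + j)) (key j).2 _ hmem
    rwa [hyz i] at hgt
  set P : Finset X := (Finset.range s).image x with hP
  have hsep' : ∀ i < K * P.card + 1, ∀ j < K * P.card + 1, i ≠ j →
      δ' < dist (chainPt G l i) (chainPt G l j) := by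
    intro i _ j _ hij
    rcases hij.lt_or_gt with h1 | h1
    · exact hsep i j h1
    · rw [dist_comm]; exact hsep j i h1
  obtain ⟨j₀, hj₀m, hj₀⟩ := hK P (chainPt G l) (K * P.card + 1) hsep' (by omega)
  have hex : ∃ j, ∀ yy ∈ l, ε' < dist yy (chainPt G l j) := by
    refine ⟨j₀, fun yy hyy => ?_⟩
    obtain ⟨i, hi, rfl⟩ := mem_prefList.mp hyy
    refine hj₀ _ ?_
    rw [hP]
    exact Finset.mem_image.mpr ⟨i, Finset.mem_range.mpr hi, rfl⟩
  have hng : newGen G ε' l = chainPt G l hex.choose := by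
    unfold newGen
    rw [dif_pos hex]
  rw [hng]
  refine ⟨(key hex.choose).1, ?_⟩
  apply not_setBall_of_forall ((Set.finite_Iio s).image x) ⟨x 0, 0, hs, rfl⟩
  intro a ha
  obtain ⟨i, hi, rfl⟩ := ha
  exact hex.choose_spec (x i) (mem_prefList.mpr ⟨i, hi, rfl⟩)

end Aux

/-- in a doubling metric space, uniform and non-uniform generatability
are invariant under changing the scale parameters. -/
theorem gen_scale_invariant_of_doubling {X : Type*} [MetricSpace X]
    (hdbl : Doubling (dist : X → X → ℝ))
    (ε ε' δ δ' : ℝ) (hδ : 0 < δ) (hδε : δ < ε) (hδ' : 0 < δ') (hδ'ε' : δ' < ε')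
    (H : Set (X → Bool)) (r : ℝ) (hr : 0 < r) (hUUS : UUS dist H r) :
    (UnifGen dist ε ε' H ↔ UnifGen dist δ δ' H) ∧
      (NonUnifGen dist ε ε' H ↔ NonUnifGen dist δ δ' H) := by
  obtain ⟨K, hK0, hKcov⟩ := covN_scale hdbl hδ hδε.le
  have hAB : ∀ (G : List X → X) (d : ℕ) (h : X → Bool),
      Gud dist ε ε' G d h → Gud dist δ δ' G (K * d) h :=
    fun G d h => easy_dir hδ'ε'.le hK0 hKcov G d h
  have hBA : ∀ (G : List X → X) (d : ℕ) (h : X → Bool),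
      Gud dist δ δ' G d h → Gud dist ε ε' (newGen G ε') d h :=
    fun G d h => hard_dir hdbl hδ' hδ'ε' hδε.le G d h
  constructor
  · constructor
    · rintro ⟨G, d, hGud⟩
      exact ⟨G, K * d, fun h hh => hAB G d h (hGud h hh)⟩
    · rintro ⟨G, d, hGud⟩
      exact ⟨newGen G ε', d, fun h hh => hBA G d h (hGud h hh)⟩
  · constructor
    · rintro ⟨G, hGud⟩
      refine ⟨G, fun h hh => ?_⟩
      obtain ⟨d, hd⟩ := hGud h hh
      exact ⟨K * d, hAB G d h hd⟩
    · rintro ⟨G, hGud⟩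
      refine ⟨newGen G ε', fun h hh => ?_⟩
      obtain ⟨d, hd⟩ := hGud h hh
      exact ⟨d, hBA G d h hd⟩

end Gen
end

section
/- In the metric space ℝ with the metric ρ(x, y) = |x − y|, there exists a hypothesis class H satisfying the r-UUS property for every r > 0 such that H is (ε, 1)-generatable in the limit for every ε ∈ (0, 1), but H is not (1, 1)-generatable in the limit. -/
open Set

namespace Gen

variable {X : Type*}

/-! ### Auxiliary development for the proof -/

section Aux

private abbrev dabs : ℝ → ℝ → ℝ := fun x y => |x - y|

private lemma nat_eq_of_abs_lt {n m : ℕ} (h : |(n : ℝ) - m| < 1) : n = m := by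
  rcases lt_trichotomy n m with h' | h' | h'
  · have h1 : (n : ℝ) + 1 ≤ m := by exact_mod_cast Nat.succ_le_of_lt h'
    have h2 := abs_lt.mp h
    linarith
  · exact h'
  · have h1 : (m : ℝ) + 1 ≤ n := by exact_mod_cast Nat.succ_le_of_lt h'
    have h2 := abs_lt.mp h
    linarith

private lemma mem_setBall_of_close {A : Set ℝ} {v y ε : ℝ} (hy : y ∈ A) (hd : |y - v| ≤ ε) :
    v ∈ setBall dabs A ε := by
  have hb : BddBelow ((fun a => dabs a v) '' A) := by
    refine ⟨0, ?_⟩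
    rintro z ⟨a, -, rfl⟩
    exact abs_nonneg _
  have : sInf ((fun a => dabs a v) '' A) ≤ |y - v| := csInf_le hb ⟨y, hy, rfl⟩
  exact le_trans this hd

private lemma not_mem_setBall_of_far {A : Set ℝ} (hA : A.Finite) (hne : A.Nonempty) {v : ℝ}
    (h : ∀ y ∈ A, 1 < |y - v|) : v ∉ setBall dabs A 1 := by
  intro hmem
  have himg : ((fun a => dabs a v) '' A).Finite := hA.image _
  have hne' : ((fun a => dabs a v) '' A).Nonempty := hne.image _
  obtain ⟨y, hy, hval⟩ := hne'.csInf_mem himg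
  have heq : sInf ((fun a => dabs a v) '' A) = |y - v| := hval.symm
  have hle : sInf ((fun a => dabs a v) '' A) ≤ 1 := hmem
  rw [heq] at hle
  exact absurd hle (not_le.mpr (h y hy))

private lemma covN_eq_top_of_unbounded {A : Set ℝ} (r : ℝ)
    (hA : ∀ M : ℝ, ∃ y ∈ A, M < y) : covN dabs r A = ⊤ := by
  apply sInf_eq_top.mpr
  rintro n ⟨S, -, hcov⟩
  exfalso
  obtain ⟨M, hM⟩ := S.bddAbove
  obtain ⟨y, hyA, hy⟩ := hA (M + r)
  have hmem := hcov hyA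
  simp only [Set.mem_iUnion] at hmem
  obtain ⟨θ, hθS, hθ⟩ := hmem
  have h1 : θ ≤ M := hM hθS
  have h2 : y - θ ≤ |θ - y| := by
    rw [abs_sub_comm]; exact le_abs_self _
  have h3 : |θ - y| ≤ r := hθ
  linarith

private lemma mem_prefList_iff {x : ℕ → ℝ} {s : ℕ} {y : ℝ} :
    y ∈ prefList x s ↔ ∃ i, i < s ∧ x i = y := by
  constructor
  · intro h
    obtain ⟨i, hi⟩ := List.mem_ofFn.mp h
    exact ⟨i.1, i.2, hi⟩
  · rintro ⟨i, hi, rfl⟩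
    exact List.mem_ofFn.mpr ⟨⟨i, hi⟩, rfl⟩

private lemma mem_prefSet_iff {x : ℕ → ℝ} {s : ℕ} {y : ℝ} :
    y ∈ prefSet x s ↔ ∃ i, i < s ∧ x i = y := by
  constructor
  · rintro ⟨i, hi, rfl⟩
    exact ⟨i, hi, rfl⟩
  · rintro ⟨i, hi, rfl⟩
    exact ⟨i, hi, rfl⟩

end Aux

/-! ### The hypothesis class -/

/-- Natural numbers `≥ 3` viewed inside `ℝ`. -/
def Nat3 : Set ℝ := {y | ∃ n : ℕ, 3 ≤ n ∧ y = n}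

/-- Three consecutive unit-spaced points starting at `a`. -/
def RunAt (S : Set ℝ) (a : ℝ) : Prop := a ∈ S ∧ a + 1 ∈ S ∧ a + 2 ∈ S

/-- The hypothesis class: supports are sets of naturals `≥ 3` that contain at least one
run of three consecutive integers, and whose runs propagate by quadrupling. -/
def myH : Set (ℝ → Bool) :=
  {h | supp h ⊆ Nat3 ∧ (∀ a : ℝ, RunAt (supp h) a → RunAt (supp h) (4 * a)) ∧
    ∃ a : ℝ, RunAt (supp h) a}

open Classical in
/-- The indicator hypothesis of a set. -/
noncomputable def ind (S : Set ℝ) : ℝ → Bool := fun y => if y ∈ S then true else false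

lemma supp_ind (S : Set ℝ) : supp (ind S) = S := by
  ext y
  simp only [supp, ind, Set.mem_setOf_eq]
  split <;> simp_all

lemma run_pow {h : ℝ → Bool} (hcl : ∀ a : ℝ, RunAt (supp h) a → RunAt (supp h) (4 * a))
    {a : ℝ} (ha : RunAt (supp h) a) : ∀ k : ℕ, RunAt (supp h) (4 ^ k * a) := by
  intro k
  induction k with
  | zero => simpa using ha
  | succ k ih =>
      have := hcl _ ih
      have he : 4 * (4 ^ k * a) = 4 ^ (k + 1) * a := by ring
      rwa [he] at this

lemma myH_unbounded {h : ℝ → Bool} (hH : h ∈ myH) : ∀ M : ℝ, ∃ y ∈ supp h, M < y := by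
  intro M
  obtain ⟨hsub, hcl, a, ha⟩ := hH
  obtain ⟨n, hn3, hna⟩ := hsub ha.1
  have ha1 : (1 : ℝ) ≤ a := by rw [hna]; exact_mod_cast Nat.one_le_iff_ne_zero.mpr (by omega)
  obtain ⟨k, hk⟩ : ∃ k : ℕ, M < 4 ^ k := pow_unbounded_of_one_lt M (by norm_num)
  refine ⟨4 ^ k * a, (run_pow hcl ha k).1, ?_⟩
  have : (4:ℝ) ^ k * 1 ≤ 4 ^ k * a := by
    apply mul_le_mul_of_nonneg_left ha1 (by positivity)
  linarith

lemma myH_UUS (r : ℝ) : UUS dabs myH r := by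
  intro h hH
  exact covN_eq_top_of_unbounded r (myH_unbounded hH)

/-! ### The generator for scales `ε < 1` -/

/-- A good output for prefix `l`: a point `4^k * a` certified by a run in `l`, lying far
beyond everything in `l`. -/
def GoodOut (l : List ℝ) (v : ℝ) : Prop :=
  ∃ a : ℝ, ∃ k : ℕ, a ∈ l ∧ (a + 1) ∈ l ∧ (a + 2) ∈ l ∧ v = 4 ^ k * a ∧ ∀ y ∈ l, y + 1 < v

open Classical in
noncomputable def Ggen : List ℝ → ℝ := fun l =>
  if h : ∃ v, GoodOut l v then h.choose else 0

lemma Ggen_spec {l : List ℝ} (h : ∃ v, GoodOut l v) : GoodOut l (Ggen l) := by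
  rw [Ggen, dif_pos h]
  exact h.choose_spec

lemma enum_of_cover {h : ℝ → Bool} (hH : h ∈ myH) {x : ℕ → ℝ} (hx : ∀ i, x i ∈ supp h)
    {ε : ℝ} (hε : ε < 1) (hcov : supp h ⊆ setBall dabs (range x) ε) :
    ∀ y ∈ supp h, ∃ i, x i = y := by
  intro y hy
  have hmem := hcov hy
  have hne : ((fun a => dabs a y) '' range x).Nonempty := ⟨dabs (x 0) y, ⟨x 0, ⟨0, rfl⟩, rfl⟩⟩
  have hlt : sInf ((fun a => dabs a y) '' range x) < 1 := lt_of_le_of_lt hmem hε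
  obtain ⟨z, ⟨a, ⟨i, rfl⟩, rfl⟩, hz⟩ := exists_lt_of_csInf_lt hne hlt
  obtain ⟨n, _, hn⟩ := hH.1 (hx i)
  obtain ⟨m, _, hm⟩ := hH.1 hy
  refine ⟨i, ?_⟩
  rw [hn, hm] at hz ⊢
  exact_mod_cast nat_eq_of_abs_lt hz

lemma myH_gen {ε : ℝ} (hε0 : 0 < ε) (hε1 : ε < 1) : GenInLimit dabs ε 1 myH := by
  refine ⟨Ggen, ?_⟩
  intro h hH x hx hcov
  obtain ⟨a, ha⟩ := hH.2.2
  have henum := enum_of_cover hH hx hε1 hcov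
  obtain ⟨i1, hi1⟩ := henum a ha.1
  obtain ⟨i2, hi2⟩ := henum (a + 1) ha.2.1
  obtain ⟨i3, hi3⟩ := henum (a + 2) ha.2.2
  refine ⟨max (max i1 (max i2 i3)) 0 + 1, ?_⟩
  intro s hs
  have hs1 : 1 ≤ s := le_trans (by omega) hs
  have hi1s : i1 < s := by omega
  have hi2s : i2 < s := by omega
  have hi3s : i3 < s := by omega
  -- a run inside the prefix
  have hma : a ∈ prefList x s := mem_prefList_iff.mpr ⟨i1, hi1s, hi1⟩
  have hmb : (a + 1) ∈ prefList x s := mem_prefList_iff.mpr ⟨i2, hi2s, hi2⟩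
  have hmc : (a + 2) ∈ prefList x s := mem_prefList_iff.mpr ⟨i3, hi3s, hi3⟩
  -- a bound on the prefix
  obtain ⟨C, hC⟩ : ∃ C : ℝ, ∀ y ∈ prefList x s, y ≤ C := by
    obtain ⟨C, hC⟩ := (prefList x s).finite_toSet.bddAbove
    exact ⟨C, fun y hy => hC hy⟩
  have ha3 : (1 : ℝ) ≤ a := by
    obtain ⟨n, hn3, hn⟩ := hH.1 ha.1
    rw [hn]; exact_mod_cast Nat.one_le_iff_ne_zero.mpr (by omega)
  obtain ⟨k, hk⟩ : ∃ k : ℕ, C + 1 < 4 ^ k := pow_unbounded_of_one_lt (C + 1) (by norm_num)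
  have hex : ∃ v, GoodOut (prefList x s) v := by
    refine ⟨4 ^ k * a, a, k, hma, hmb, hmc, rfl, ?_⟩
    intro y hy
    have h1 : (4:ℝ) ^ k * 1 ≤ 4 ^ k * a := mul_le_mul_of_nonneg_left ha3 (by positivity)
    have := hC y hy
    linarith
  obtain ⟨a', k', h1, h2, h3, hv, hfar⟩ := Ggen_spec hex
  have hmem : ∀ y ∈ prefList x s, y ∈ supp h := by
    intro y hy
    obtain ⟨i, _, rfl⟩ := mem_prefList_iff.mp hy
    exact hx i
  constructor
  · -- Ggen (prefList x s) ∈ supp h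
    have hrun : RunAt (supp h) a' := ⟨hmem _ h1, hmem _ h2, hmem _ h3⟩
    have := (run_pow hH.2.1 hrun k').1
    rwa [← hv] at this
  · -- not in the 1-neighborhood of the prefix
    apply not_mem_setBall_of_far
    · exact (Set.finite_Iio s).image x
    · exact ⟨x 0, 0, hs1, rfl⟩
    · intro y hy
      obtain ⟨i, hi, rfl⟩ := mem_prefSet_iff.mp hy
      have := hfar (x i) (mem_prefList_iff.mpr ⟨i, hi, rfl⟩)
      rw [abs_sub_comm]
      rw [abs_of_pos (by linarith)]
      linarith

/-! ### The adversary construction against a `(1,1)`-generator -/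

section Adversary

variable (G : List ℝ → ℝ)

open Classical in
/-- Pair of points revealed for the level-`m` run of the first chain (base `10 * 4^m`),
given the history list `l`. -/
noncomputable def paA (l : List ℝ) (m : ℕ) : List ℝ :=
  if (10 * 4 ^ m + 1 : ℝ) ∈ (List.range (4 * m + 1)).map (fun s => G (l.take s)) then
    [10 * 4 ^ m, 10 * 4 ^ m + 2] else [10 * 4 ^ m + 1, 10 * 4 ^ m + 1]

open Classical in
/-- Pair of points revealed for the level-`m` run of the second chain (base `17 * 4^m`). -/
noncomputable def pbB (l : List ℝ) (m : ℕ) : List ℝ :=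
  if (17 * 4 ^ m + 1 : ℝ) ∈ (List.range (4 * m + 3)).map (fun s => G (l.take s)) then
    [17 * 4 ^ m, 17 * 4 ^ m + 2] else [17 * 4 ^ m + 1, 17 * 4 ^ m + 1]

/-- The history after `m` full stages. -/
noncomputable def adv : ℕ → List ℝ :=
  Nat.rec [] (fun m l => (l ++ paA G l m) ++ pbB G (l ++ paA G l m) m)

/-- The adversarial example sequence. -/
noncomputable def xseq (n : ℕ) : ℝ := (adv G (n + 1)).getD n 0

/-- Whether the adversary revealed the two endpoints (rather than the midpoint) of the
level-`m` run of the first chain. -/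
def EndsA (m : ℕ) : Prop :=
  (10 * 4 ^ m + 1 : ℝ) ∈ (List.range (4 * m + 1)).map (fun s => G ((adv G m).take s))

def EndsB (m : ℕ) : Prop :=
  (17 * 4 ^ m + 1 : ℝ) ∈
    (List.range (4 * m + 3)).map (fun s => G ((adv G m ++ paA G (adv G m) m).take s))

lemma adv_succ (m : ℕ) :
    adv G (m + 1) = (adv G m ++ paA G (adv G m) m) ++ pbB G (adv G m ++ paA G (adv G m) m) m :=
  rfl

open Classical in
lemma paA_eq (m : ℕ) :
    paA G (adv G m) m =
      if EndsA G m then [(10 * 4 ^ m : ℝ), 10 * 4 ^ m + 2]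
      else [(10 * 4 ^ m + 1 : ℝ), 10 * 4 ^ m + 1] := by
  unfold paA EndsA
  congr

open Classical in
lemma pbB_eq (m : ℕ) :
    pbB G (adv G m ++ paA G (adv G m) m) m =
      if EndsB G m then [(17 * 4 ^ m : ℝ), 17 * 4 ^ m + 2]
      else [(17 * 4 ^ m + 1 : ℝ), 17 * 4 ^ m + 1] := by
  unfold pbB EndsB
  congr

lemma paA_length (l : List ℝ) (m : ℕ) : (paA G l m).length = 2 := by
  rw [paA]; split <;> rfl

lemma pbB_length (l : List ℝ) (m : ℕ) : (pbB G l m).length = 2 := by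
  rw [pbB]; split <;> rfl

lemma adv_length (m : ℕ) : (adv G m).length = 4 * m := by
  induction m with
  | zero => rfl
  | succ m ih =>
      rw [adv_succ, List.length_append, List.length_append, paA_length, pbB_length, ih]
      omega

lemma adv_prefix_succ (m : ℕ) : adv G m <+: adv G (m + 1) := by
  rw [adv_succ, List.append_assoc]
  exact ⟨_, rfl⟩

lemma adv_prefix {m M : ℕ} (h : m ≤ M) : adv G m <+: adv G M := by
  induction M with
  | zero => rw [Nat.le_zero.mp h]
  | succ M ih =>
      rcases Nat.lt_or_ge m (M + 1) with h' | h'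
      · exact (ih (by omega)).trans (adv_prefix_succ G M)
      · have : m = M + 1 := by omega
        rw [this]

lemma adv_getElem {m M i : ℕ} (h : m ≤ M) (hi : i < 4 * m) :
    (adv G M)[i]'(by rw [adv_length]; omega) = (adv G m)[i]'(by rw [adv_length]; omega) := by
  have hp := adv_prefix G h
  exact (List.IsPrefix.getElem hp _).symm

lemma xseq_eq_getElem {M i : ℕ} (hi : i < 4 * M) :
    xseq G i = (adv G M)[i]'(by rw [adv_length]; omega) := by
  rw [xseq]
  have h1 : i < (adv G (i + 1)).length := by rw [adv_length]; omega
  rw [List.getD_eq_getElem _ _ h1]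
  rcases Nat.le_total (i + 1) M with h | h
  · exact (adv_getElem G h (by omega)).symm
  · exact adv_getElem G h hi

lemma adv_take_eq_prefList {s M : ℕ} (h : s ≤ 4 * M) :
    (adv G M).take s = prefList (xseq G) s := by
  apply List.ext_getElem
  · rw [List.length_take, adv_length, prefList, List.length_ofFn]; omega
  · intro i h1 h2
    have hi : i < s := by
      have := h1; rw [List.length_take, adv_length] at this; omega
    rw [List.getElem_take]
    rw [show (prefList (xseq G) s)[i]'h2 = xseq G i by simp [prefList]]
    exact (xseq_eq_getElem G (by omega)).symm

end Adversary

section Adversary2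

variable (G : List ℝ → ℝ)

lemma xseq_getD {M i : ℕ} (h : i < 4 * M) : xseq G i = (adv G M).getD i 0 := by
  rw [List.getD_eq_getElem _ _ (by rw [adv_length]; omega)]
  exact xseq_eq_getElem G h

lemma adv_succ' (m : ℕ) :
    adv G (m + 1) =
      adv G m ++ (paA G (adv G m) m ++ pbB G (adv G m ++ paA G (adv G m) m) m) := by
  rw [adv_succ, List.append_assoc]

open Classical in
lemma xseq_4m0 (m : ℕ) :
    xseq G (4 * m) = if EndsA G m then (10 * 4 ^ m : ℝ) else 10 * 4 ^ m + 1 := by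
  rw [xseq_getD G (show 4 * m < 4 * (m + 1) by omega), adv_succ' G m,
    List.getD_append_right _ _ _ _ (by rw [adv_length]), adv_length]
  have h0 : 4 * m - 4 * m = 0 := by omega
  rw [h0, List.getD_append _ _ _ _ (by rw [paA_length]; omega), paA_eq]
  by_cases hE : EndsA G m <;> simp [hE]

open Classical in
lemma xseq_4m1 (m : ℕ) :
    xseq G (4 * m + 1) = if EndsA G m then (10 * 4 ^ m + 2 : ℝ) else 10 * 4 ^ m + 1 := by
  rw [xseq_getD G (show 4 * m + 1 < 4 * (m + 1) by omega), adv_succ' G m,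
    List.getD_append_right _ _ _ _ (by rw [adv_length]; omega), adv_length]
  have h0 : 4 * m + 1 - 4 * m = 1 := by omega
  rw [h0, List.getD_append _ _ _ _ (by rw [paA_length]; omega), paA_eq]
  by_cases hE : EndsA G m <;> simp [hE]

open Classical in
lemma xseq_4m2 (m : ℕ) :
    xseq G (4 * m + 2) = if EndsB G m then (17 * 4 ^ m : ℝ) else 17 * 4 ^ m + 1 := by
  rw [xseq_getD G (show 4 * m + 2 < 4 * (m + 1) by omega), adv_succ' G m,
    List.getD_append_right _ _ _ _ (by rw [adv_length]; omega), adv_length]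
  have h0 : 4 * m + 2 - 4 * m = 2 := by omega
  rw [h0, List.getD_append_right _ _ _ _ (by rw [paA_length])]
  rw [paA_length]
  have h1 : 2 - 2 = 0 := by omega
  rw [h1, pbB_eq]
  by_cases hE : EndsB G m <;> simp [hE]

open Classical in
lemma xseq_4m3 (m : ℕ) :
    xseq G (4 * m + 3) = if EndsB G m then (17 * 4 ^ m + 2 : ℝ) else 17 * 4 ^ m + 1 := by
  rw [xseq_getD G (show 4 * m + 3 < 4 * (m + 1) by omega), adv_succ' G m,
    List.getD_append_right _ _ _ _ (by rw [adv_length]; omega), adv_length]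
  have h0 : 4 * m + 3 - 4 * m = 3 := by omega
  rw [h0, List.getD_append_right _ _ _ _ (by rw [paA_length]; omega)]
  rw [paA_length]
  have h1 : 3 - 2 = 1 := by omega
  rw [h1, pbB_eq]
  by_cases hE : EndsB G m <;> simp [hE]

end Adversary2

/-! ### Arithmetic about the values `e * 4^m + j` -/

private lemma four_step {m m' : ℕ} (h : m < m') : 4 * (4 : ℝ) ^ m ≤ 4 ^ m' := by
  have h1 := pow_le_pow_right₀ (show (1:ℝ) ≤ 4 by norm_num) (show m + 1 ≤ m' by omega)
  rwa [pow_succ, mul_comm ((4:ℝ) ^ m) 4] at h1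

private lemma val_gap {e e' : ℝ} {m m' : ℕ} {i i' : ℝ}
    (he : e = 10 ∨ e = 17) (he' : e' = 10 ∨ e' = 17)
    (hi0 : 0 ≤ i) (hi3 : i ≤ 3) (hi0' : 0 ≤ i') (hi3' : i' ≤ 3)
    (hne : ¬(e = e' ∧ m = m')) :
    e * 4 ^ m + i + 1 < e' * 4 ^ m' + i' ∨ e' * 4 ^ m' + i' + 1 < e * 4 ^ m + i := by
  have p1 : (1 : ℝ) ≤ 4 ^ m := one_le_pow₀ (by norm_num)
  have p2 : (1 : ℝ) ≤ 4 ^ m' := one_le_pow₀ (by norm_num)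
  rcases he with rfl | rfl <;> rcases he' with rfl | rfl
  · have hmm : m ≠ m' := by tauto
    rcases Nat.lt_or_ge m m' with h | h
    · left; have := four_step h; nlinarith
    · have h' : m' < m := by omega
      right; have := four_step h'; nlinarith
  · rcases le_or_gt m m' with h | h
    · left
      have := pow_le_pow_right₀ (show (1:ℝ) ≤ 4 by norm_num) h
      nlinarith
    · right; have := four_step h; nlinarith
  · rcases le_or_gt m' m with h | h
    · right
      have := pow_le_pow_right₀ (show (1:ℝ) ≤ 4 by norm_num) h
      nlinarith
    · left; have := four_step h; nlinarith
  · have hmm : m ≠ m' := by tauto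
    rcases Nat.lt_or_ge m m' with h | h
    · left; have := four_step h; nlinarith
    · have h' : m' < m := by omega
      right; have := four_step h'; nlinarith

private lemma val_inj {e e' : ℝ} {m m' : ℕ} {i i' : ℝ}
    (he : e = 10 ∨ e = 17) (he' : e' = 10 ∨ e' = 17)
    (hi0 : 0 ≤ i) (hi3 : i ≤ 3) (hi0' : 0 ≤ i') (hi3' : i' ≤ 3)
    (heq : e * 4 ^ m + i = e' * 4 ^ m' + i') : e = e' ∧ m = m' ∧ i = i' := by
  by_cases h : e = e' ∧ m = m'
  · refine ⟨h.1, h.2, ?_⟩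
    rw [h.1, h.2] at heq
    linarith
  · rcases val_gap he he' hi0 hi3 hi0' hi3' h with h' | h' <;> linarith

/-! ### The two chains and their supports -/

def PA : Set ℝ := {y | ∃ m : ℕ, ∃ j : ℝ, (j = 0 ∨ j = 1 ∨ j = 2) ∧ y = 10 * 4 ^ m + j}

def PB : Set ℝ := {y | ∃ m : ℕ, ∃ j : ℝ, (j = 0 ∨ j = 1 ∨ j = 2) ∧ y = 17 * 4 ^ m + j}

noncomputable def SA (G : List ℝ → ℝ) : Set ℝ := PA ∪ range (xseq G)

noncomputable def SB (G : List ℝ → ℝ) : Set ℝ := PB ∪ range (xseq G)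

private lemma off_nonneg {j : ℝ} (hj : j = 0 ∨ j = 1 ∨ j = 2) : 0 ≤ j := by
  rcases hj with rfl | rfl | rfl <;> norm_num

private lemma off_le3 {j : ℝ} (hj : j = 0 ∨ j = 1 ∨ j = 2) : j ≤ 3 := by
  rcases hj with rfl | rfl | rfl <;> norm_num

private lemma val_mem_Nat3 {e : ℕ} (he : 3 ≤ e) (m : ℕ) {j : ℝ}
    (hj : j = 0 ∨ j = 1 ∨ j = 2) : ((e : ℝ) * 4 ^ m + j) ∈ Nat3 := by
  have h1 : 1 ≤ 4 ^ m := Nat.one_le_pow m 4 (by norm_num)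
  have h2 := Nat.mul_le_mul he h1
  rcases hj with rfl | rfl | rfl
  · exact ⟨e * 4 ^ m + 0, by omega, by push_cast; ring⟩
  · exact ⟨e * 4 ^ m + 1, by omega, by push_cast; ring⟩
  · exact ⟨e * 4 ^ m + 2, by omega, by push_cast; ring⟩

section Adversary3

variable (G : List ℝ → ℝ)

lemma xseq_shape (n : ℕ) : ∃ (m : ℕ) (e j : ℝ), (e = 10 ∨ e = 17) ∧
    (j = 0 ∨ j = 1 ∨ j = 2) ∧ xseq G n = e * 4 ^ m + j := by
  have hr4 : n % 4 = 0 ∨ n % 4 = 1 ∨ n % 4 = 2 ∨ n % 4 = 3 := by omega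
  set q := n / 4 with hq
  rcases hr4 with hr | hr | hr | hr
  · have hn : n = 4 * q := by omega
    rw [hn, xseq_4m0]
    by_cases hE : EndsA G q
    · rw [if_pos hE]; exact ⟨q, 10, 0, Or.inl rfl, Or.inl rfl, by ring⟩
    · rw [if_neg hE]; exact ⟨q, 10, 1, Or.inl rfl, Or.inr (Or.inl rfl), rfl⟩
  · have hn : n = 4 * q + 1 := by omega
    rw [hn, xseq_4m1]
    by_cases hE : EndsA G q
    · rw [if_pos hE]; exact ⟨q, 10, 2, Or.inl rfl, Or.inr (Or.inr rfl), rfl⟩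
    · rw [if_neg hE]; exact ⟨q, 10, 1, Or.inl rfl, Or.inr (Or.inl rfl), rfl⟩
  · have hn : n = 4 * q + 2 := by omega
    rw [hn, xseq_4m2]
    by_cases hE : EndsB G q
    · rw [if_pos hE]; exact ⟨q, 17, 0, Or.inr rfl, Or.inl rfl, by ring⟩
    · rw [if_neg hE]; exact ⟨q, 17, 1, Or.inr rfl, Or.inr (Or.inl rfl), rfl⟩
  · have hn : n = 4 * q + 3 := by omega
    rw [hn, xseq_4m3]
    by_cases hE : EndsB G q
    · rw [if_pos hE]; exact ⟨q, 17, 2, Or.inr rfl, Or.inr (Or.inr rfl), rfl⟩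
    · rw [if_neg hE]; exact ⟨q, 17, 1, Or.inr rfl, Or.inr (Or.inl rfl), rfl⟩

lemma SA_shape {y : ℝ} (hy : y ∈ SA G) : ∃ (m : ℕ) (e j : ℝ), (e = 10 ∨ e = 17) ∧
    (j = 0 ∨ j = 1 ∨ j = 2) ∧ y = e * 4 ^ m + j := by
  rcases hy with ⟨m, j, hj, rfl⟩ | ⟨n, rfl⟩
  · exact ⟨m, 10, j, Or.inl rfl, hj, rfl⟩
  · obtain ⟨m, e, j, h1, h2, h3⟩ := xseq_shape G n
    exact ⟨m, e, j, h1, h2, h3 ▸ rfl⟩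

lemma SB_shape {y : ℝ} (hy : y ∈ SB G) : ∃ (m : ℕ) (e j : ℝ), (e = 10 ∨ e = 17) ∧
    (j = 0 ∨ j = 1 ∨ j = 2) ∧ y = e * 4 ^ m + j := by
  rcases hy with ⟨m, j, hj, rfl⟩ | ⟨n, rfl⟩
  · exact ⟨m, 17, j, Or.inr rfl, hj, rfl⟩
  · obtain ⟨m, e, j, h1, h2, h3⟩ := xseq_shape G n
    exact ⟨m, e, j, h1, h2, h3 ▸ rfl⟩

/-- Where a first-chain value can occur in the adversarial sequence. -/
lemma xseq_A_loc {n m : ℕ} {t : ℝ} (ht : t = 0 ∨ t = 1 ∨ t = 2)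
    (h : xseq G n = 10 * 4 ^ m + t) :
    (EndsA G m ∧ ((t = 0 ∧ n = 4 * m) ∨ (t = 2 ∧ n = 4 * m + 1))) ∨
      (¬EndsA G m ∧ t = 1 ∧ (n = 4 * m ∨ n = 4 * m + 1)) := by
  have ht0 := off_nonneg ht
  have ht3 := off_le3 ht
  set q := n / 4 with hq
  have hr4 : n % 4 = 0 ∨ n % 4 = 1 ∨ n % 4 = 2 ∨ n % 4 = 3 := by omega
  rcases hr4 with hr | hr | hr | hr
  · have hn : n = 4 * q := by omega
    rw [hn, xseq_4m0] at h
    by_cases hE : EndsA G q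
    · rw [if_pos hE] at h
      have h' : (10 : ℝ) * 4 ^ q + 0 = 10 * 4 ^ m + t := by rw [← h]; ring
      obtain ⟨-, hm, hts⟩ := val_inj (Or.inl rfl) (Or.inl rfl) le_rfl (by norm_num) ht0 ht3 h'
      subst hm
      exact Or.inl ⟨hE, Or.inl ⟨hts.symm, hn⟩⟩
    · rw [if_neg hE] at h
      obtain ⟨-, hm, hts⟩ := val_inj (Or.inl rfl) (Or.inl rfl) (by norm_num)
        (by norm_num) ht0 ht3 h
      subst hm
      exact Or.inr ⟨hE, hts.symm, Or.inl hn⟩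
  · have hn : n = 4 * q + 1 := by omega
    rw [hn, xseq_4m1] at h
    by_cases hE : EndsA G q
    · rw [if_pos hE] at h
      obtain ⟨-, hm, hts⟩ := val_inj (Or.inl rfl) (Or.inl rfl) (by norm_num)
        (by norm_num) ht0 ht3 h
      subst hm
      exact Or.inl ⟨hE, Or.inr ⟨hts.symm, hn⟩⟩
    · rw [if_neg hE] at h
      obtain ⟨-, hm, hts⟩ := val_inj (Or.inl rfl) (Or.inl rfl) (by norm_num)
        (by norm_num) ht0 ht3 h
      subst hm
      exact Or.inr ⟨hE, hts.symm, Or.inr hn⟩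
  · have hn : n = 4 * q + 2 := by omega
    rw [hn, xseq_4m2] at h
    exfalso
    by_cases hE : EndsB G q
    · rw [if_pos hE] at h
      have h' : (17 : ℝ) * 4 ^ q + 0 = 10 * 4 ^ m + t := by rw [← h]; ring
      obtain ⟨habs, -, -⟩ := val_inj (Or.inr rfl) (Or.inl rfl) le_rfl (by norm_num) ht0 ht3 h'
      norm_num at habs
    · rw [if_neg hE] at h
      obtain ⟨habs, -, -⟩ := val_inj (Or.inr rfl) (Or.inl rfl) (by norm_num)
        (by norm_num) ht0 ht3 h
      norm_num at habs
  · have hn : n = 4 * q + 3 := by omega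
    rw [hn, xseq_4m3] at h
    exfalso
    by_cases hE : EndsB G q
    · rw [if_pos hE] at h
      obtain ⟨habs, -, -⟩ := val_inj (Or.inr rfl) (Or.inl rfl) (by norm_num)
        (by norm_num) ht0 ht3 h
      norm_num at habs
    · rw [if_neg hE] at h
      obtain ⟨habs, -, -⟩ := val_inj (Or.inr rfl) (Or.inl rfl) (by norm_num)
        (by norm_num) ht0 ht3 h
      norm_num at habs

/-- Where a second-chain value can occur in the adversarial sequence. -/
lemma xseq_B_loc {n m : ℕ} {t : ℝ} (ht : t = 0 ∨ t = 1 ∨ t = 2)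
    (h : xseq G n = 17 * 4 ^ m + t) :
    (EndsB G m ∧ ((t = 0 ∧ n = 4 * m + 2) ∨ (t = 2 ∧ n = 4 * m + 3))) ∨
      (¬EndsB G m ∧ t = 1 ∧ (n = 4 * m + 2 ∨ n = 4 * m + 3)) := by
  have ht0 := off_nonneg ht
  have ht3 := off_le3 ht
  set q := n / 4 with hq
  have hr4 : n % 4 = 0 ∨ n % 4 = 1 ∨ n % 4 = 2 ∨ n % 4 = 3 := by omega
  rcases hr4 with hr | hr | hr | hr
  · have hn : n = 4 * q := by omega
    rw [hn, xseq_4m0] at h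
    exfalso
    by_cases hE : EndsA G q
    · rw [if_pos hE] at h
      have h' : (10 : ℝ) * 4 ^ q + 0 = 17 * 4 ^ m + t := by rw [← h]; ring
      obtain ⟨habs, -, -⟩ := val_inj (Or.inl rfl) (Or.inr rfl) le_rfl (by norm_num) ht0 ht3 h'
      norm_num at habs
    · rw [if_neg hE] at h
      obtain ⟨habs, -, -⟩ := val_inj (Or.inl rfl) (Or.inr rfl) (by norm_num)
        (by norm_num) ht0 ht3 h
      norm_num at habs
  · have hn : n = 4 * q + 1 := by omega
    rw [hn, xseq_4m1] at h
    exfalso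
    by_cases hE : EndsA G q
    · rw [if_pos hE] at h
      obtain ⟨habs, -, -⟩ := val_inj (Or.inl rfl) (Or.inr rfl) (by norm_num)
        (by norm_num) ht0 ht3 h
      norm_num at habs
    · rw [if_neg hE] at h
      obtain ⟨habs, -, -⟩ := val_inj (Or.inl rfl) (Or.inr rfl) (by norm_num)
        (by norm_num) ht0 ht3 h
      norm_num at habs
  · have hn : n = 4 * q + 2 := by omega
    rw [hn, xseq_4m2] at h
    by_cases hE : EndsB G q
    · rw [if_pos hE] at h
      have h' : (17 : ℝ) * 4 ^ q + 0 = 17 * 4 ^ m + t := by rw [← h]; ring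
      obtain ⟨-, hm, hts⟩ := val_inj (Or.inr rfl) (Or.inr rfl) le_rfl (by norm_num) ht0 ht3 h'
      subst hm
      exact Or.inl ⟨hE, Or.inl ⟨hts.symm, hn⟩⟩
    · rw [if_neg hE] at h
      obtain ⟨-, hm, hts⟩ := val_inj (Or.inr rfl) (Or.inr rfl) (by norm_num)
        (by norm_num) ht0 ht3 h
      subst hm
      exact Or.inr ⟨hE, hts.symm, Or.inl hn⟩
  · have hn : n = 4 * q + 3 := by omega
    rw [hn, xseq_4m3] at h
    by_cases hE : EndsB G q
    · rw [if_pos hE] at h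
      obtain ⟨-, hm, hts⟩ := val_inj (Or.inr rfl) (Or.inr rfl) (by norm_num)
        (by norm_num) ht0 ht3 h
      subst hm
      exact Or.inl ⟨hE, Or.inr ⟨hts.symm, hn⟩⟩
    · rw [if_neg hE] at h
      obtain ⟨-, hm, hts⟩ := val_inj (Or.inr rfl) (Or.inr rfl) (by norm_num)
        (by norm_num) ht0 ht3 h
      subst hm
      exact Or.inr ⟨hE, hts.symm, Or.inr hn⟩

end Adversary3

section Adversary4

variable (G : List ℝ → ℝ)

lemma SA_run_base {a : ℝ} (h : RunAt (SA G) a) : ∃ m : ℕ, a = 10 * 4 ^ m := by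
  obtain ⟨m, e, j, he, hj, rfl⟩ := SA_shape G h.1
  have hj0 := off_nonneg hj
  have hj3 := off_le3 hj
  -- the run cannot start at offset 1 or 2
  rcases hj with rfl | rfl | rfl
  · -- offset 0; now rule out the second chain
    rcases he with rfl | rfl
    · exact ⟨m, by ring⟩
    · exfalso
      -- 17 * 4^m, +1, +2 all in SA; none can be in PA
      have hnotPA : ∀ t : ℝ, (t = 0 ∨ t = 1 ∨ t = 2) → (17 * 4 ^ m + t) ∈ SA G →
          ∃ n, xseq G n = 17 * 4 ^ m + t := by
        rintro t ht (⟨k, j', hj', hval⟩ | ⟨n, hn⟩)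
        · exfalso
          have h' : (17 : ℝ) * 4 ^ m + t = 10 * 4 ^ k + j' := hval.symm ▸ rfl
          obtain ⟨habs, -, -⟩ := val_inj (Or.inr rfl) (Or.inl rfl) (off_nonneg ht)
            (off_le3 ht) (off_nonneg hj') (off_le3 hj') (by rw [← hval])
          norm_num at habs
        · exact ⟨n, hn⟩
      have h0 : (17 : ℝ) * 4 ^ m + 0 ∈ SA G := by
        exact h.1
      have h1' : (17 : ℝ) * 4 ^ m + 1 ∈ SA G := by
        have h1 := h.2.1; rw [show (17 : ℝ) * 4 ^ m + 0 + 1 = 17 * 4 ^ m + 1 by ring] at h1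
        exact h1
      obtain ⟨n0, hx0⟩ := hnotPA 0 (Or.inl rfl) h0
      obtain ⟨n1, hx1⟩ := hnotPA 1 (Or.inr (Or.inl rfl)) h1'
      have hE0 := xseq_B_loc G (Or.inl rfl) hx0
      have hE1 := xseq_B_loc G (Or.inr (Or.inl rfl)) hx1
      rcases hE0 with ⟨hE, -⟩ | ⟨-, habs, -⟩
      · rcases hE1 with ⟨-, (⟨habs, -⟩ | ⟨habs, -⟩)⟩ | ⟨hnE, -, -⟩
        · norm_num at habs
        · norm_num at habs
        · exact hnE hE
      · norm_num at habs
  · -- offset 1: then a + 2 has offset 3, impossible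
    exfalso
    obtain ⟨m', e', j', he', hj', hval⟩ := SA_shape G h.2.2
    have h' : e * 4 ^ m + 3 = e' * 4 ^ m' + j' := by rw [← hval]; ring
    obtain ⟨-, -, habs⟩ := val_inj he he' (by norm_num) (by norm_num)
      (off_nonneg hj') (off_le3 hj') h'
    rcases hj' with rfl | rfl | rfl <;> norm_num at habs
  · -- offset 2: then a + 1 has offset 3, impossible
    exfalso
    obtain ⟨m', e', j', he', hj', hval⟩ := SA_shape G h.2.1
    have h' : e * 4 ^ m + 3 = e' * 4 ^ m' + j' := by rw [← hval]; ring
    obtain ⟨-, -, habs⟩ := val_inj he he' (by norm_num) (by norm_num)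
      (off_nonneg hj') (off_le3 hj') h'
    rcases hj' with rfl | rfl | rfl <;> norm_num at habs

lemma SB_run_base {a : ℝ} (h : RunAt (SB G) a) : ∃ m : ℕ, a = 17 * 4 ^ m := by
  obtain ⟨m, e, j, he, hj, rfl⟩ := SB_shape G h.1
  rcases hj with rfl | rfl | rfl
  · rcases he with rfl | rfl
    · exfalso
      have hnotPB : ∀ t : ℝ, (t = 0 ∨ t = 1 ∨ t = 2) → (10 * 4 ^ m + t) ∈ SB G →
          ∃ n, xseq G n = 10 * 4 ^ m + t := by
        rintro t ht (⟨k, j', hj', hval⟩ | ⟨n, hn⟩)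
        · exfalso
          obtain ⟨habs, -, -⟩ := val_inj (Or.inl rfl) (Or.inr rfl) (off_nonneg ht)
            (off_le3 ht) (off_nonneg hj') (off_le3 hj') (by rw [← hval])
          norm_num at habs
        · exact ⟨n, hn⟩
      have h0 : (10 : ℝ) * 4 ^ m + 0 ∈ SB G := by
        exact h.1
      have h1' : (10 : ℝ) * 4 ^ m + 1 ∈ SB G := by
        have h1 := h.2.1; rw [show (10 : ℝ) * 4 ^ m + 0 + 1 = 10 * 4 ^ m + 1 by ring] at h1
        exact h1
      obtain ⟨n0, hx0⟩ := hnotPB 0 (Or.inl rfl) h0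
      obtain ⟨n1, hx1⟩ := hnotPB 1 (Or.inr (Or.inl rfl)) h1'
      have hE0 := xseq_A_loc G (Or.inl rfl) hx0
      have hE1 := xseq_A_loc G (Or.inr (Or.inl rfl)) hx1
      rcases hE0 with ⟨hE, -⟩ | ⟨-, habs, -⟩
      · rcases hE1 with ⟨-, (⟨habs, -⟩ | ⟨habs, -⟩)⟩ | ⟨hnE, -, -⟩
        · norm_num at habs
        · norm_num at habs
        · exact hnE hE
      · norm_num at habs
    · exact ⟨m, by ring⟩
  · exfalso
    obtain ⟨m', e', j', he', hj', hval⟩ := SB_shape G h.2.2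
    have h' : e * 4 ^ m + 3 = e' * 4 ^ m' + j' := by rw [← hval]; ring
    obtain ⟨-, -, habs⟩ := val_inj he he' (by norm_num) (by norm_num)
      (off_nonneg hj') (off_le3 hj') h'
    rcases hj' with rfl | rfl | rfl <;> norm_num at habs
  · exfalso
    obtain ⟨m', e', j', he', hj', hval⟩ := SB_shape G h.2.1
    have h' : e * 4 ^ m + 3 = e' * 4 ^ m' + j' := by rw [← hval]; ring
    obtain ⟨-, -, habs⟩ := val_inj he he' (by norm_num) (by norm_num)
      (off_nonneg hj') (off_le3 hj') h'
    rcases hj' with rfl | rfl | rfl <;> norm_num at habs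

lemma PA_block (m : ℕ) : RunAt (SA G) (10 * 4 ^ m) := by
  refine ⟨Or.inl ⟨m, 0, Or.inl rfl, by ring⟩, Or.inl ⟨m, 1, Or.inr (Or.inl rfl), rfl⟩,
    Or.inl ⟨m, 2, Or.inr (Or.inr rfl), rfl⟩⟩

lemma PB_block (m : ℕ) : RunAt (SB G) (17 * 4 ^ m) := by
  refine ⟨Or.inl ⟨m, 0, Or.inl rfl, by ring⟩, Or.inl ⟨m, 1, Or.inr (Or.inl rfl), rfl⟩,
    Or.inl ⟨m, 2, Or.inr (Or.inr rfl), rfl⟩⟩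

lemma SA_mem_myH : ind (SA G) ∈ myH := by
  refine ⟨?_, ?_, ?_⟩
  · rw [supp_ind]
    intro y hy
    obtain ⟨m, e, j, he, hj, rfl⟩ := SA_shape G hy
    rcases he with rfl | rfl
    · exact_mod_cast val_mem_Nat3 (show 3 ≤ 10 by norm_num) m hj
    · exact_mod_cast val_mem_Nat3 (show 3 ≤ 17 by norm_num) m hj
  · rw [supp_ind]
    intro a ha
    obtain ⟨m, rfl⟩ := SA_run_base G ha
    have h4 : 4 * (10 * (4 : ℝ) ^ m) = 10 * 4 ^ (m + 1) := by ring
    rw [h4]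
    exact PA_block G (m + 1)
  · rw [supp_ind]
    exact ⟨10 * 4 ^ 0, PA_block G 0⟩

lemma SB_mem_myH : ind (SB G) ∈ myH := by
  refine ⟨?_, ?_, ?_⟩
  · rw [supp_ind]
    intro y hy
    obtain ⟨m, e, j, he, hj, rfl⟩ := SB_shape G hy
    rcases he with rfl | rfl
    · exact_mod_cast val_mem_Nat3 (show 3 ≤ 10 by norm_num) m hj
    · exact_mod_cast val_mem_Nat3 (show 3 ≤ 17 by norm_num) m hj
  · rw [supp_ind]
    intro a ha
    obtain ⟨m, rfl⟩ := SB_run_base G ha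
    have h4 : 4 * (17 * (4 : ℝ) ^ m) = 17 * 4 ^ (m + 1) := by ring
    rw [h4]
    exact PB_block G (m + 1)
  · rw [supp_ind]
    exact ⟨17 * 4 ^ 0, PB_block G 0⟩

lemma SA_cover : SA G ⊆ setBall dabs (range (xseq G)) 1 := by
  rintro y (⟨m, j, hj, rfl⟩ | ⟨n, rfl⟩)
  · by_cases hE : EndsA G m
    · rcases hj with rfl | rfl | rfl
      · exact mem_setBall_of_close ⟨4 * m, rfl⟩
          (by rw [xseq_4m0, if_pos hE]; simp)
      · exact mem_setBall_of_close ⟨4 * m, rfl⟩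
          (by rw [xseq_4m0, if_pos hE]; rw [show (10 * 4 ^ m : ℝ) - (10 * 4 ^ m + 1) = -1 by ring]; norm_num)
      · exact mem_setBall_of_close ⟨4 * m + 1, rfl⟩
          (by rw [xseq_4m1, if_pos hE]; simp)
    · refine mem_setBall_of_close ⟨4 * m, rfl⟩ ?_
      rw [xseq_4m0, if_neg hE]
      rcases hj with rfl | rfl | rfl
      · rw [show (10 * 4 ^ m + 1 : ℝ) - (10 * 4 ^ m + 0) = 1 by ring]; norm_num
      · simp
      · rw [show (10 * 4 ^ m + 1 : ℝ) - (10 * 4 ^ m + 2) = -1 by ring]; norm_num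
  · exact mem_setBall_of_close ⟨n, rfl⟩ (by simp)

lemma SB_cover : SB G ⊆ setBall dabs (range (xseq G)) 1 := by
  rintro y (⟨m, j, hj, rfl⟩ | ⟨n, rfl⟩)
  · by_cases hE : EndsB G m
    · rcases hj with rfl | rfl | rfl
      · exact mem_setBall_of_close ⟨4 * m + 2, rfl⟩
          (by rw [xseq_4m2, if_pos hE]; simp)
      · exact mem_setBall_of_close ⟨4 * m + 2, rfl⟩
          (by rw [xseq_4m2, if_pos hE]; rw [show (17 * 4 ^ m : ℝ) - (17 * 4 ^ m + 1) = -1 by ring]; norm_num)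
      · exact mem_setBall_of_close ⟨4 * m + 3, rfl⟩
          (by rw [xseq_4m3, if_pos hE]; simp)
    · refine mem_setBall_of_close ⟨4 * m + 2, rfl⟩ ?_
      rw [xseq_4m2, if_neg hE]
      rcases hj with rfl | rfl | rfl
      · rw [show (17 * 4 ^ m + 1 : ℝ) - (17 * 4 ^ m + 0) = 1 by ring]; norm_num
      · simp
      · rw [show (17 * 4 ^ m + 1 : ℝ) - (17 * 4 ^ m + 2) = -1 by ring]; norm_num
  · exact mem_setBall_of_close ⟨n, rfl⟩ (by simp)

lemma endsA_of_target {q s : ℕ} (hs : s ≤ 4 * q)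
    (hv : G (prefList (xseq G) s) = 10 * 4 ^ q + 1) : EndsA G q := by
  unfold EndsA
  apply List.mem_map.mpr
  refine ⟨s, List.mem_range.mpr (by omega), ?_⟩
  rw [adv_take_eq_prefList G (by omega), hv]

lemma endsA_target {q : ℕ} (hE : EndsA G q) :
    ∃ s ≤ 4 * q, G (prefList (xseq G) s) = 10 * 4 ^ q + 1 := by
  obtain ⟨s, hs, hv⟩ := List.mem_map.mp hE
  rw [List.mem_range] at hs
  refine ⟨s, by omega, ?_⟩
  rw [← adv_take_eq_prefList G (show s ≤ 4 * q by omega)]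
  exact hv

lemma l2_take {q s : ℕ} (hs : s ≤ 4 * q + 2) :
    (adv G q ++ paA G (adv G q) q).take s = prefList (xseq G) s := by
  have hpre : (adv G q ++ paA G (adv G q) q) <+: adv G (q + 1) := by
    rw [adv_succ]; exact ⟨_, rfl⟩
  obtain ⟨t, ht⟩ := hpre
  have hlen : s ≤ (adv G q ++ paA G (adv G q) q).length := by
    rw [List.length_append, adv_length, paA_length]; omega
  have h1 : (adv G q ++ paA G (adv G q) q).take s = (adv G (q + 1)).take s := by
    rw [← ht, List.take_append_of_le_length hlen]
  rw [h1, adv_take_eq_prefList G (by omega)]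

lemma endsB_of_target {q s : ℕ} (hs : s ≤ 4 * q + 2)
    (hv : G (prefList (xseq G) s) = 17 * 4 ^ q + 1) : EndsB G q := by
  unfold EndsB
  apply List.mem_map.mpr
  refine ⟨s, List.mem_range.mpr (by omega), ?_⟩
  rw [l2_take G hs, hv]

lemma endsB_target {q : ℕ} (hE : EndsB G q) :
    ∃ s ≤ 4 * q + 2, G (prefList (xseq G) s) = 17 * 4 ^ q + 1 := by
  obtain ⟨s, hs, hv⟩ := List.mem_map.mp hE
  rw [List.mem_range] at hs
  refine ⟨s, by omega, ?_⟩
  rw [← l2_take G (show s ≤ 4 * q + 2 by omega)]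
  exact hv

end Adversary4

/-! ### The main negative result -/

noncomputable def vout (G : List ℝ → ℝ) (s : ℕ) : ℝ := G (prefList (xseq G) s)

lemma myH_not_gen : ¬ GenInLimit dabs 1 1 myH := by
  rintro ⟨G, hG⟩
  obtain ⟨tA, hsA⟩ := hG (ind (SA G)) (SA_mem_myH G) (xseq G)
    (fun i => by rw [supp_ind]; exact Or.inr ⟨i, rfl⟩)
    (by rw [supp_ind]; exact SA_cover G)
  obtain ⟨tB, hsB⟩ := hG (ind (SB G)) (SB_mem_myH G) (xseq G)
    (fun i => by rw [supp_ind]; exact Or.inr ⟨i, rfl⟩)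
    (by rw [supp_ind]; exact SB_cover G)
  set t0 := max tA tB with ht0
  have hsucc : ∀ s, t0 ≤ s →
      vout G s ∈ SA G ∧ vout G s ∈ SB G ∧ vout G s ∉ setBall dabs (prefSet (xseq G) s) 1 := by
    intro s hs
    have h1 := hsA s (le_trans (le_max_left _ _) hs)
    have h2 := hsB s (le_trans (le_max_right _ _) hs)
    rw [Set.mem_diff, supp_ind] at h1 h2
    exact ⟨h1.1, h2.1, h1.2⟩
  -- Key classification of all late outputs
  have K : ∀ s, t0 ≤ s → ∃ (q : ℕ) (e t : ℝ), (e = 10 ∨ e = 17) ∧ (t = 0 ∨ t = 2) ∧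
      vout G s = e * 4 ^ q + t ∧ s ≤ 4 * q + 3 ∧
      ((e = 10 ∧ EndsA G q) ∨ (e = 17 ∧ EndsB G q)) := by
    intro s hs
    obtain ⟨hA', hB', hfar'⟩ := hsucc s hs
    have hnear : ∀ i, i < s → ¬(|xseq G i - vout G s| ≤ 1) := by
      intro i hi hle
      exact hfar' (mem_setBall_of_close ⟨i, hi, rfl⟩ hle)
    have hrange : ∃ n, xseq G n = vout G s := by
      rcases hA' with hPA | hr
      · rcases hB' with hPB | hr'
        · exfalso
          obtain ⟨m, j, hj, hval⟩ := hPA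
          obtain ⟨m', j', hj', hval'⟩ := hPB
          have heq : (10 : ℝ) * 4 ^ m + j = 17 * 4 ^ m' + j' := by rw [← hval, ← hval']
          obtain ⟨habs, -, -⟩ := val_inj (Or.inl rfl) (Or.inr rfl) (off_nonneg hj)
            (off_le3 hj) (off_nonneg hj') (off_le3 hj') heq
          norm_num at habs
        · exact hr'
      · exact hr
    obtain ⟨n, hn⟩ := hrange
    set q := n / 4 with hq
    have hr4 : n % 4 = 0 ∨ n % 4 = 1 ∨ n % 4 = 2 ∨ n % 4 = 3 := by omega
    rcases hr4 with hr | hr | hr | hr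
    · have hneq : n = 4 * q := by omega
      rw [hneq, xseq_4m0] at hn
      by_cases hE : EndsA G q
      · rw [if_pos hE] at hn
        have hs4 : s ≤ 4 * q := by
          by_contra hgt
          push_neg at hgt
          refine hnear (4 * q) hgt ?_
          rw [xseq_4m0, if_pos hE, hn]
          simp
        exact ⟨q, 10, 0, Or.inl rfl, Or.inl rfl, by rw [← hn]; ring, by omega,
          Or.inl ⟨rfl, hE⟩⟩
      · rw [if_neg hE] at hn
        exfalso
        rcases le_or_gt s (4 * q) with hs4 | hs4
        · exact hE (endsA_of_target G hs4 hn.symm)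
        · refine hnear (4 * q) hs4 ?_
          rw [xseq_4m0, if_neg hE, hn]
          simp
    · have hneq : n = 4 * q + 1 := by omega
      rw [hneq, xseq_4m1] at hn
      by_cases hE : EndsA G q
      · rw [if_pos hE] at hn
        have hs4 : s ≤ 4 * q + 1 := by
          by_contra hgt
          push_neg at hgt
          refine hnear (4 * q + 1) hgt ?_
          rw [xseq_4m1, if_pos hE, hn]
          simp
        exact ⟨q, 10, 2, Or.inl rfl, Or.inr rfl, hn.symm, by omega, Or.inl ⟨rfl, hE⟩⟩
      · rw [if_neg hE] at hn
        exfalso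
        rcases le_or_gt s (4 * q) with hs4 | hs4
        · exact hE (endsA_of_target G hs4 hn.symm)
        · refine hnear (4 * q) hs4 ?_
          rw [xseq_4m0, if_neg hE, hn]
          simp
    · have hneq : n = 4 * q + 2 := by omega
      rw [hneq, xseq_4m2] at hn
      by_cases hE : EndsB G q
      · rw [if_pos hE] at hn
        have hs4 : s ≤ 4 * q + 2 := by
          by_contra hgt
          push_neg at hgt
          refine hnear (4 * q + 2) hgt ?_
          rw [xseq_4m2, if_pos hE, hn]
          simp
        exact ⟨q, 17, 0, Or.inr rfl, Or.inl rfl, by rw [← hn]; ring, by omega,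
          Or.inr ⟨rfl, hE⟩⟩
      · rw [if_neg hE] at hn
        exfalso
        rcases le_or_gt s (4 * q + 2) with hs4 | hs4
        · exact hE (endsB_of_target G hs4 hn.symm)
        · refine hnear (4 * q + 2) hs4 ?_
          rw [xseq_4m2, if_neg hE, hn]
          simp
    · have hneq : n = 4 * q + 3 := by omega
      rw [hneq, xseq_4m3] at hn
      by_cases hE : EndsB G q
      · rw [if_pos hE] at hn
        have hs4 : s ≤ 4 * q + 3 := by
          by_contra hgt
          push_neg at hgt
          refine hnear (4 * q + 3) hgt ?_
          rw [xseq_4m3, if_pos hE, hn]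
          simp
        exact ⟨q, 17, 2, Or.inr rfl, Or.inr rfl, hn.symm, hs4, Or.inr ⟨rfl, hE⟩⟩
      · rw [if_neg hE] at hn
        exfalso
        rcases le_or_gt s (4 * q + 2) with hs4 | hs4
        · exact hE (endsB_of_target G hs4 hn.symm)
        · refine hnear (4 * q + 2) hs4 ?_
          rw [xseq_4m2, if_neg hE, hn]
          simp
  -- bound the finitely many early outputs
  obtain ⟨C, hC⟩ : ∃ C : ℝ, ∀ s < t0, vout G s ≤ C := by
    obtain ⟨C, hC⟩ := ((Set.finite_Iio t0).image (vout G)).bddAbove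
    exact ⟨C, fun s hs => hC ⟨s, hs, rfl⟩⟩
  obtain ⟨N1, hN1⟩ : ∃ N : ℕ, C < 4 ^ N := pow_unbounded_of_one_lt C (by norm_num)
  set N := max N1 t0 with hN
  have hs1 : t0 ≤ 4 * N + 3 := by
    have := le_max_right N1 t0
    omega
  obtain ⟨q, e, t, he, ht, hvq, hsq, hEnds⟩ := K (4 * N + 3) hs1
  have hNq : N ≤ q := by omega
  obtain ⟨s', hs'le, hvs'⟩ : ∃ s' ≤ 4 * q + 2, vout G s' = e * 4 ^ q + 1 := by
    rcases hEnds with ⟨rfl, hE⟩ | ⟨rfl, hE⟩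
    · obtain ⟨s', h1, h2⟩ := endsA_target G hE
      exact ⟨s', by omega, h2⟩
    · obtain ⟨s', h1, h2⟩ := endsB_target G hE
      exact ⟨s', h1, h2⟩
  rcases lt_or_ge s' t0 with hlt | hge
  · have hle : vout G s' ≤ C := hC s' hlt
    rw [hvs'] at hle
    have hp : (4 : ℝ) ^ N1 ≤ 4 ^ q :=
      pow_le_pow_right₀ (by norm_num) (le_trans (le_max_left N1 t0) hNq)
    have he10 : (10 : ℝ) ≤ e := by rcases he with rfl | rfl <;> norm_num
    have h1 : (0 : ℝ) < 4 ^ q := by positivity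
    nlinarith
  · obtain ⟨q2, e2, t2, he2, ht2, hvq2, -, -⟩ := K s' hge
    rw [hvs'] at hvq2
    have ht20 : (0 : ℝ) ≤ t2 := by rcases ht2 with rfl | rfl <;> norm_num
    have ht23 : t2 ≤ 3 := by rcases ht2 with rfl | rfl <;> norm_num
    obtain ⟨-, -, hofft⟩ := val_inj he he2 (by norm_num) (by norm_num) ht20 ht23 hvq2
    rcases ht2 with rfl | rfl <;> norm_num at hofft


/-- in `ℝ`, generatability in the limit can fail abruptly at a threshold
scale: some UUS class is `(ε,1)`-generatable in the limit for all `ε ∈ (0,1)` but not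
`(1,1)`-generatable in the limit. -/
theorem exists_threshold_genInLimit_real :
    ∃ H : Set (ℝ → Bool),
      (∀ r : ℝ, 0 < r → UUS (fun x y : ℝ => |x - y|) H r) ∧
      (∀ ε : ℝ, 0 < ε → ε < 1 → GenInLimit (fun x y : ℝ => |x - y|) ε 1 H) ∧
      ¬ GenInLimit (fun x y : ℝ => |x - y|) 1 1 H :=
  ⟨myH, fun r _ => myH_UUS r, fun _ h0 h1 => myH_gen h0 h1, myH_not_gen⟩

end Gen
end

section
/- In ℓ², for any r > 0 and any ε, ε' with 0 < ε < ε' ≤ r, there exists a hypothesis class H on ℓ² consisting of exactly two hypotheses, satisfying the r-UUS property, that is not (ε, ε')-non-uniformly generatable. -/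
open Set

namespace Gen

variable {X : Type*}

/-- The real Hilbert space `ℓ²` of square-summable real sequences. -/
noncomputable abbrev ellTwo : Type := lp (fun _ : ℕ => ℝ) 2

noncomputable def sing (i : ℕ) (c : ℝ) : ellTwo := lp.single 2 i c

lemma sing_apply_self (i : ℕ) (c : ℝ) : (sing i c : ℕ → ℝ) i = c :=
  lp.single_apply_self (E := fun _ : ℕ => ℝ) 2 i c

lemma sing_apply_ne (i : ℕ) (c : ℝ) {j : ℕ} (h : j ≠ i) : (sing i c : ℕ → ℝ) j = 0 :=
  lp.single_apply_ne (E := fun _ : ℕ => ℝ) 2 i c h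

lemma norm_sing (i : ℕ) (c : ℝ) : ‖sing i c‖ = |c| := by
  have h : (0:ℝ) < (2:ENNReal).toReal := by norm_num
  rw [← Real.norm_eq_abs]; exact lp.norm_single (E := fun _ : ℕ => ℝ) (by norm_num : (0:ENNReal) < 2) i c

lemma abs_coord_le (θ : ellTwo) (i : ℕ) (c : ℝ) : |(θ : ℕ → ℝ) i - c| ≤ dist θ (sing i c) := by
  have h1 : ((θ - sing i c : ellTwo) : ℕ → ℝ) i = (θ : ℕ → ℝ) i - c := by
    rw [lp.coeFn_sub]; simp [sing_apply_self]
  have h2 := lp.norm_apply_le_norm (E := fun _ : ℕ => ℝ) (by norm_num : (2:ENNReal) ≠ 0) (θ - sing i c) i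
  rw [dist_eq_norm]
  simpa [h1, Real.norm_eq_abs] using h2

lemma sum_sq_le (θ : ellTwo) (s : Finset ℕ) : ∑ i ∈ s, ((θ : ℕ → ℝ) i)^2 ≤ ‖θ‖^2 := by
  have h : (0:ℝ) < (2:ENNReal).toReal := by norm_num
  have key := lp.sum_rpow_le_norm_rpow (E := fun _ : ℕ => ℝ) h θ s
  have e : (2:ENNReal).toReal = (2:ℝ) := by norm_num
  rw [e] at key
  calc ∑ i ∈ s, ((θ : ℕ → ℝ) i)^2 = ∑ i ∈ s, ‖(θ : ℕ → ℝ) i‖ ^ (2:ℝ) := by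
        refine Finset.sum_congr rfl fun i _ => ?_
        rw [Real.norm_eq_abs, show ((2:ℝ) = ((2:ℕ):ℝ)) by norm_num, Real.rpow_natCast]
        simp [sq_abs]
    _ ≤ ‖θ‖ ^ (2:ℝ) := key
    _ = ‖θ‖^2 := by rw [show ((2:ℝ) = ((2:ℕ):ℝ)) by norm_num, Real.rpow_natCast]

def Dset (ε' : ℝ) : Set ellTwo := insert 0 {v | ∃ i : ℕ, v = sing i ε'}
def Aset (j : ℕ) (r : ℝ) : Set ellTwo := {v | ∃ k : ℕ, v = sing j (3*r*((k:ℝ)+1))}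

open Classical in
noncomputable def hyp (S : Set ellTwo) : ellTwo → Bool := fun v => decide (v ∈ S)

lemma supp_hyp (S : Set ellTwo) : supp (hyp S) = S := by
  classical
  ext v; simp [supp, hyp]

lemma fiber_card {ε ε' : ℝ} (hε : 0 < ε) (hεε' : ε < ε') (θ : ellTwo) (n : ℕ) :
    (Finset.filter (fun i => dist θ (sing i ε') ≤ ε) (Finset.range n)).card
      ≤ Nat.ceil (((ε'+ε)/(ε'-ε))^2) := by
  classical
  set F := Finset.filter (fun i => dist θ (sing i ε') ≤ ε) (Finset.range n) with hF
  rcases F.eq_empty_or_nonempty with h | ⟨i₀, hi₀⟩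
  · simp [h]
  have hcoord : ∀ i ∈ F, ε' - ε ≤ (θ : ℕ → ℝ) i := by
    intro i hi
    have hd : dist θ (sing i ε') ≤ ε := (Finset.mem_filter.1 hi).2
    have h1 := (abs_coord_le θ i ε').trans hd
    have h2 := (abs_le.1 h1).1
    linarith
  have hnorm : ‖θ‖ ≤ ε' + ε := by
    have hd : dist θ (sing i₀ ε') ≤ ε := (Finset.mem_filter.1 hi₀).2
    have h1 : ‖θ‖ - ‖sing i₀ ε'‖ ≤ ‖θ - sing i₀ ε'‖ := norm_sub_norm_le _ _
    rw [← dist_eq_norm] at h1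
    rw [norm_sing, abs_of_pos (by linarith)] at h1
    linarith
  have hsum : (F.card : ℝ) * (ε' - ε)^2 ≤ (ε' + ε)^2 := by
    have h1 : (F.card : ℝ) * (ε' - ε)^2 ≤ ∑ i ∈ F, ((θ : ℕ → ℝ) i)^2 := by
      calc (F.card : ℝ) * (ε' - ε)^2 = ∑ _i ∈ F, (ε' - ε)^2 := by
            rw [Finset.sum_const, nsmul_eq_mul]
        _ ≤ ∑ i ∈ F, ((θ : ℕ → ℝ) i)^2 :=
            Finset.sum_le_sum (fun i hi =>
              pow_le_pow_left₀ (by linarith) (hcoord i hi) 2)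
    have h2 := sum_sq_le θ F
    have h3 : ‖θ‖^2 ≤ (ε' + ε)^2 := by nlinarith [norm_nonneg θ]
    linarith
  have hd0 : (0:ℝ) < ε' - ε := by linarith
  have hpos : (0:ℝ) < (ε' - ε)^2 := by positivity
  have hq : (F.card : ℝ) ≤ ((ε'+ε)/(ε'-ε))^2 := by
    rw [div_pow, le_div_iff₀ hpos]
    linarith
  have := hq.trans (Nat.le_ceil _)
  exact_mod_cast this


lemma covN_A_top {r : ℝ} (hr : 0 < r) (j : ℕ) (U : Set ellTwo) (hU : Aset j r ⊆ U) :
    covN dist r U = ⊤ := by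
  classical
  rw [covN]
  convert sInf_empty
  · rfl
  rw [Set.eq_empty_iff_forall_notMem]
  rintro n ⟨S, hcard, hcov⟩
  have hpt : ∀ k : ℕ, ∃ θ, θ ∈ S ∧ dist θ (sing j (3*r*((k:ℝ)+1))) ≤ r := by
    intro k
    have hmem : sing j (3*r*((k:ℝ)+1)) ∈ U := hU ⟨k, rfl⟩
    have h2 := hcov hmem
    simp only [Set.mem_iUnion, ball, Set.mem_setOf_eq] at h2
    obtain ⟨θ, hθS, hθ⟩ := h2
    exact ⟨θ, hθS, hθ⟩
  choose g hgS hgd using hpt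
  have hmaps : ∀ k ∈ Finset.range (S.card + 1), g k ∈ S := fun k _ => hgS k
  have hfib : ∀ θ ∈ S,
      (Finset.filter (fun k => g k = θ) (Finset.range (S.card + 1))).card ≤ 1 := by
    intro θ _
    refine Finset.card_le_one.2 ?_
    intro a ha b hb
    simp only [Finset.mem_filter] at ha hb
    by_contra hab
    have hga := hgd a; rw [ha.2] at hga
    have hgb := hgd b; rw [hb.2] at hgb
    have h1 : dist (sing j (3*r*((a:ℝ)+1))) (sing j (3*r*((b:ℝ)+1))) ≤ 2*r := by
      calc dist (sing j (3*r*((a:ℝ)+1))) (sing j (3*r*((b:ℝ)+1)))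
          ≤ dist (sing j (3*r*((a:ℝ)+1))) θ + dist θ (sing j (3*r*((b:ℝ)+1))) :=
            dist_triangle _ _ _
        _ ≤ r + r := by rw [dist_comm]; linarith
        _ = 2*r := by ring
    have h2 : |3*r*((a:ℝ)+1) - 3*r*((b:ℝ)+1)|
        ≤ dist (sing j (3*r*((a:ℝ)+1))) (sing j (3*r*((b:ℝ)+1))) := by
      have h3 := abs_coord_le (sing j (3*r*((a:ℝ)+1))) j (3*r*((b:ℝ)+1))
      rwa [sing_apply_self] at h3
    have h3 : (1:ℝ) ≤ |(a:ℝ) - (b:ℝ)| := by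
      rcases Ne.lt_or_gt hab with h | h
      · have hab' : (a:ℝ) + 1 ≤ (b:ℝ) := by exact_mod_cast h
        rw [abs_sub_comm, abs_of_pos (by linarith)]
        linarith
      · have hab' : (b:ℝ) + 1 ≤ (a:ℝ) := by exact_mod_cast h
        rw [abs_of_pos (by linarith)]
        linarith
    have h4 : 3*r ≤ |3*r*((a:ℝ)+1) - 3*r*((b:ℝ)+1)| := by
      have he : 3*r*((a:ℝ)+1) - 3*r*((b:ℝ)+1) = 3*r*((a:ℝ)-(b:ℝ)) := by ring
      rw [he, abs_mul, abs_of_pos (by linarith : (0:ℝ) < 3*r)]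
      nlinarith
    linarith
  have hcard2 := Finset.card_le_mul_card_image_of_maps_to hmaps 1 hfib
  rw [Finset.card_range, one_mul] at hcard2
  omega

lemma covN_lower {ε ε' : ℝ} (hε : 0 < ε) (hεε' : ε < ε') (n : ℕ) (A : Set ellTwo)
    (hA : ∀ i, i < n → sing i ε' ∈ A) (d : ℕ)
    (hn : Nat.ceil (((ε'+ε)/(ε'-ε))^2) * d ≤ n) :
    (d : ℕ∞) ≤ covN dist ε A := by
  classical
  refine le_sInf ?_
  rintro m ⟨S, rfl, hcov⟩
  rw [Nat.cast_le]
  have hpt : ∀ i : ℕ, ∃ θ : ellTwo, i < n → θ ∈ S ∧ dist θ (sing i ε') ≤ ε := by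
    intro i
    by_cases hi : i < n
    · have hmem := hcov (hA i hi)
      simp only [Set.mem_iUnion, ball, Set.mem_setOf_eq] at hmem
      obtain ⟨θ, hθS, hθ⟩ := hmem
      exact ⟨θ, fun _ => ⟨hθS, hθ⟩⟩
    · exact ⟨0, fun h => absurd h hi⟩
  choose g hg using hpt
  have hmaps : ∀ i ∈ Finset.range n, g i ∈ S := fun i hi =>
    (hg i (Finset.mem_range.1 hi)).1
  set K := Nat.ceil (((ε'+ε)/(ε'-ε))^2) with hK
  have hfib : ∀ θ ∈ S, (Finset.filter (fun i => g i = θ) (Finset.range n)).card ≤ K := by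
    intro θ _
    refine le_trans (Finset.card_le_card ?_) (fiber_card hε hεε' θ n)
    intro i hi
    simp only [Finset.mem_filter, Finset.mem_range] at hi ⊢
    refine ⟨hi.1, ?_⟩
    have := (hg i hi.1).2
    rwa [hi.2] at this
  have hcount := Finset.card_le_mul_card_image_of_maps_to hmaps K hfib
  rw [Finset.card_range] at hcount
  have hK0 : 0 < K := by
    rw [hK]
    refine Nat.ceil_pos.2 ?_
    have h1 : (0:ℝ) < ε' - ε := by linarith
    have h2 : (0:ℝ) < ε' + ε := by linarith
    positivity
  have : K * d ≤ K * S.card := hn.trans hcount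
  exact Nat.le_of_mul_le_mul_left this hK0

/-- in `ℓ²`, when `ε < ε'`, there is a two-hypothesis UUS class that is not
`(ε, ε')`-non-uniformly generatable. -/
theorem exists_two_hypotheses_not_nonUnifGen_l2 (r : ℝ) (hr : 0 < r)
    (ε ε' : ℝ) (hε : 0 < ε) (hεε' : ε < ε') (hε'r : ε' ≤ r) :
    ∃ H : Set (ellTwo → Bool),
      (∃ h₁ h₂ : ellTwo → Bool, h₁ ≠ h₂ ∧ H = {h₁, h₂}) ∧
      UUS dist H r ∧ ¬ NonUnifGen dist ε ε' H := by
  have hε'0 : 0 < ε' := lt_trans hε hεε'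
  -- points of Aset are never in Dset
  have hsing_ne : ∀ (j k : ℕ), sing j (3*r*((k:ℝ)+1)) ∉ Dset ε' := by
    intro j k h
    have hkpos : (0:ℝ) < 3*r*((k:ℝ)+1) := by
      have : (0:ℝ) ≤ (k:ℝ) := Nat.cast_nonneg k
      nlinarith
    rcases Set.mem_insert_iff.1 h with h0 | ⟨i, hi⟩
    · have hc := congrArg (fun v : ellTwo => (v : ℕ → ℝ) j) h0
      dsimp only at hc
      rw [sing_apply_self] at hc
      simp at hc
      rcases hc with hc | hc <;> nlinarith [Nat.cast_nonneg (α := ℝ) k]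
    · by_cases hij : i = j
      · subst hij
        have hc := congrArg (fun v : ellTwo => (v : ℕ → ℝ) i) hi
        dsimp only at hc
        rw [sing_apply_self, sing_apply_self] at hc
        have : (0:ℝ) ≤ (k:ℝ) := Nat.cast_nonneg k
        nlinarith
      · have hc := congrArg (fun v : ellTwo => (v : ℕ → ℝ) i) hi
        dsimp only at hc
        rw [sing_apply_ne _ _ (fun hh => hij hh), sing_apply_self] at hc
        linarith
  set S₁ : Set ellTwo := Dset ε' ∪ Aset 0 r with hS₁
  set S₂ : Set ellTwo := Dset ε' ∪ Aset 1 r with hS₂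
  refine ⟨{hyp S₁, hyp S₂}, ⟨hyp S₁, hyp S₂, ?_, rfl⟩, ?_, ?_⟩
  · -- h₁ ≠ h₂
    intro heq
    have hp : sing 0 (3*r*(((0:ℕ):ℝ)+1)) ∈ supp (hyp S₁) := by
      rw [supp_hyp]; exact Or.inr ⟨0, rfl⟩
    rw [heq, supp_hyp] at hp
    rcases hp with hp | ⟨k, hk⟩
    · exact hsing_ne 0 0 hp
    · have hc := congrArg (fun v : ellTwo => (v : ℕ → ℝ) 0) hk
      dsimp only at hc
      rw [sing_apply_self, sing_apply_ne _ _ (by norm_num : (0:ℕ) ≠ 1)] at hc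
      norm_num at hc
      rcases hc with hc | hc <;> linarith
  · -- UUS
    intro h hh
    rcases Set.mem_insert_iff.1 hh with rfl | hh
    · rw [supp_hyp]
      exact covN_A_top hr 0 _ Set.subset_union_right
    · rw [Set.mem_singleton_iff.1 hh, supp_hyp]
      exact covN_A_top hr 1 _ Set.subset_union_right
  · -- not NonUnifGen
    rintro ⟨G, hG⟩
    obtain ⟨d₁, hd₁⟩ := hG (hyp S₁) (Set.mem_insert _ _)
    obtain ⟨d₂, hd₂⟩ := hG (hyp S₂) (Set.mem_insert_of_mem _ rfl)
    set K := Nat.ceil (((ε'+ε)/(ε'-ε))^2) with hKdef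
    set d := max d₁ d₂ with hd
    set t := K * d + 1 with ht
    set x : ℕ → ellTwo := fun n => Nat.casesOn n 0 (fun i => sing i ε') with hx
    have hx0 : x 0 = 0 := rfl
    have hxs : ∀ i : ℕ, x (i+1) = sing i ε' := fun i => rfl
    have hxD : ∀ i, x i ∈ Dset ε' := by
      intro i
      cases i with
      | zero => exact Set.mem_insert _ _
      | succ i => exact Set.mem_insert_of_mem _ ⟨i, rfl⟩
    have hmem₁ : ∀ i, x i ∈ supp (hyp S₁) := fun i => by
      rw [supp_hyp]; exact Or.inl (hxD i)
    have hmem₂ : ∀ i, x i ∈ supp (hyp S₂) := fun i => by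
      rw [supp_hyp]; exact Or.inl (hxD i)
    have hcovt : (d : ℕ∞) ≤ covN dist ε (prefSet x t) := by
      refine covN_lower hε hεε' (K*d) _ ?_ d le_rfl
      intro i hi
      exact ⟨i+1, by simpa [Set.mem_Iio, ht] using Nat.succ_lt_succ hi, hxs i⟩
    have hc₁ : (d₁ : ℕ∞) ≤ covN dist ε (prefSet x t) :=
      le_trans (by exact_mod_cast le_max_left d₁ d₂) hcovt
    have hc₂ : (d₂ : ℕ∞) ≤ covN dist ε (prefSet x t) :=
      le_trans (by exact_mod_cast le_max_right d₁ d₂) hcovt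
    have hz₁ := hd₁ x hmem₁ t hc₁ t le_rfl
    have hz₂ := hd₂ x hmem₂ t hc₂ t le_rfl
    set z := G (prefList x t) with hz
    have hzD : z ∈ Dset ε' := by
      have h1 : z ∈ S₁ := by rw [← supp_hyp S₁]; exact hz₁.1
      have h2 : z ∈ S₂ := by rw [← supp_hyp S₂]; exact hz₂.1
      rcases h1 with h1 | ⟨k, hk⟩
      · exact h1
      · rcases h2 with h2 | ⟨k', hk'⟩
        · exact h2
        · exfalso
          rw [hk] at hk'
          have hc := congrArg (fun v : ellTwo => (v : ℕ → ℝ) 0) hk'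
          dsimp only at hc
          rw [sing_apply_self, sing_apply_ne _ _ (by norm_num : (0:ℕ) ≠ 1)] at hc
          have : (0:ℝ) ≤ (k:ℝ) := Nat.cast_nonneg k
          nlinarith
    apply hz₁.2
    show sInf ((fun a => dist a z) '' prefSet x t) ≤ ε'
    have h0mem : (0:ellTwo) ∈ prefSet x t := ⟨0, by simp [Set.mem_Iio, ht], hx0⟩
    have hb : BddBelow ((fun a => dist a z) '' prefSet x t) := by
      refine ⟨0, ?_⟩
      rintro w ⟨a, _, rfl⟩
      exact dist_nonneg
    have hle : sInf ((fun a => dist a z) '' prefSet x t) ≤ dist (0:ellTwo) z :=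
      csInf_le hb ⟨0, h0mem, rfl⟩
    refine le_trans hle ?_
    rcases Set.mem_insert_iff.1 hzD with h | ⟨i, hzi⟩
    · rw [h, dist_self]; exact hε'0.le
    · rw [hzi, dist_zero_left, norm_sing, abs_of_pos hε'0]

end Gen
end
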